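/- arXiv:1412.3217 — 5 statements merged into one kernel-verified Lean document; each statement's English description precedes it below -/
import Mathlib

section
/- Every biholomorphic automorphism γ = (γ₀, γ₁, …, γₙ) of ℂ* × 𝔹ⁿ has the property that the components γ₁, …, γₙ do not depend on the first variable w₀ ∈ ℂ*; that is, for fixed w ∈ 𝔹ⁿ, the map w₀ ↦ γᵢ(w₀, w) is constant for each 1 ≤ i ≤ n. -/
open Filter Function Set Bornology Topology

/-- The product ℂ* × 𝔹ⁿ ⊂ ℂ × ℂⁿ. -/
def CstarBall (n : ℕ) : Set (ℂ × (Fin n → ℂ)) :=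
  {p | p.1 ≠ 0 ∧ ∑ i : Fin n, ‖p.2 i‖ ^ 2 < 1}

/-- For any biholomorphic automorphism γ of ℂ* × 𝔹ⁿ, the last n components of γ
do not depend on the first variable w₀ ∈ ℂ*. -/
theorem stmt_2 (n : ℕ) (γ δ : ℂ × (Fin n → ℂ) → ℂ × (Fin n → ℂ))
    (hγ : DifferentiableOn ℂ γ (CstarBall n)) (hδ : DifferentiableOn ℂ δ (CstarBall n))
    (hγm : Set.MapsTo γ (CstarBall n) (CstarBall n))
    (hδm : Set.MapsTo δ (CstarBall n) (CstarBall n))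
    (hinv : Set.InvOn δ γ (CstarBall n) (CstarBall n)) :
    ∀ w : Fin n → ℂ, (∑ i : Fin n, ‖w i‖ ^ 2) < 1 →
      ∀ w₀ w₀' : ℂ, w₀ ≠ 0 → w₀' ≠ 0 → (γ (w₀, w)).2 = (γ (w₀', w)).2 := by
  intro w hw w₀ w₀' h0 h0'
  set f : ℂ → (Fin n → ℂ) := fun z => (γ (z, w)).2 with hf
  have hmem : ∀ z : ℂ, z ≠ 0 → ((z, w) : ℂ × (Fin n → ℂ)) ∈ CstarBall n :=
    fun z hz => ⟨hz, hw⟩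
  -- f is differentiable on ℂ \ {0}
  have hdf : DifferentiableOn ℂ f ((Set.univ : Set ℂ) \ {0}) := by
    intro z hz
    have hz0 : z ≠ 0 := hz.2
    have hpair : DifferentiableWithinAt ℂ (fun z : ℂ => ((z, w) : ℂ × (Fin n → ℂ)))
        ((Set.univ : Set ℂ) \ {0}) z :=
      (differentiableAt_id.prodMk (differentiableAt_const w)).differentiableWithinAt
    have hmap : Set.MapsTo (fun z : ℂ => ((z, w) : ℂ × (Fin n → ℂ)))
        ((Set.univ : Set ℂ) \ {0}) (CstarBall n) := fun z hz => hmem z hz.2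
    exact ((hγ _ (hmem z hz0)).comp z hpair hmap).snd
  -- ‖f z‖ ≤ 1 on ℂ \ {0}
  have hbound : ∀ z : ℂ, z ≠ 0 → ‖f z‖ ≤ 1 := by
    intro z hz
    have hsum : ∑ i : Fin n, ‖(γ (z, w)).2 i‖ ^ 2 < 1 := (hγm (hmem z hz)).2
    rw [pi_norm_le_iff_of_nonneg zero_le_one]
    intro i
    have hterm : ‖(γ (z, w)).2 i‖ ^ 2 ≤ ∑ j : Fin n, ‖(γ (z, w)).2 j‖ ^ 2 :=
      Finset.single_le_sum (f := fun j => ‖(γ (z, w)).2 j‖ ^ 2) (fun j _ => by positivity) (Finset.mem_univ i)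
    nlinarith [norm_nonneg ((γ (z, w)).2 i)]
  have hbdd : BddAbove (norm ∘ f '' ((Set.univ : Set ℂ) \ {0})) := by
    refine ⟨1, ?_⟩
    rintro x ⟨z, hz, rfl⟩
    exact hbound z hz.2
  -- removable singularity
  set g : ℂ → (Fin n → ℂ) := Function.update f 0 (limUnder (𝓝[≠] 0) f) with hg
  have hdg : Differentiable ℂ g := by
    rw [← differentiableOn_univ]
    exact Complex.differentiableOn_update_limUnder_of_bddAbove univ_mem hdf hbdd
  have hgf : ∀ z : ℂ, z ≠ 0 → g z = f z := fun z hz => Function.update_of_ne hz _ _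
  -- g is bounded
  have hgb : ∀ z : ℂ, ‖g z‖ ≤ 1 := by
    intro z
    rcases eq_or_ne z 0 with rfl | hz
    · have ht : Tendsto g (𝓝[≠] (0 : ℂ)) (𝓝 (g 0)) :=
        (hdg.continuous.tendsto 0).mono_left nhdsWithin_le_nhds
      have : Tendsto (fun z => ‖g z‖) (𝓝[≠] (0 : ℂ)) (𝓝 ‖g 0‖) := ht.norm
      refine le_of_tendsto this ?_
      filter_upwards [self_mem_nhdsWithin] with z hz
      rw [hgf z hz]
      exact hbound z hz
    · rw [hgf z hz]; exact hbound z hz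
  have hrange : IsBounded (Set.range g) := by
    apply (Metric.isBounded_closedBall (x := (0 : Fin n → ℂ)) (r := 1)).subset
    rintro x ⟨z, rfl⟩
    simpa [Metric.mem_closedBall, dist_eq_norm] using hgb z
  have := hdg.apply_eq_apply_of_bounded hrange w₀ w₀'
  rw [hgf w₀ h0, hgf w₀' h0'] at this
  exact this
end

section
/- Let p, q, k be nonnegative integers with p + q ≥ 2 and p + q > k. Then any Lie algebra homomorphism from su(p,q) to gl(k, ℂ) (over ℝ) is trivial. -/
open Matrix

/-- The Hermitian form matrix J = diag(-I_p, I_q). -/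
def Jpq (p q : ℕ) : Matrix (Fin (p + q)) (Fin (p + q)) ℂ :=
  Matrix.diagonal fun i => if (i : ℕ) < p then -1 else 1

/-- The real Lie algebra su(p,q) = {X : XᴴJ + JX = 0, tr X = 0}. -/
def su (p q : ℕ) : Set (Matrix (Fin (p + q)) (Fin (p + q)) ℂ) :=
  {X | Xᴴ * Jpq p q + Jpq p q * X = 0 ∧ X.trace = 0}

namespace SLsimple

section Brackets
variable {n : ℕ} (i j a b : Fin n)

lemma L1 (hai : a ≠ i) :
    single i j (1:ℂ) * single j a 1 - single j a 1 * single i j 1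
      = single i a 1 := by
  rw [single_mul_single_same, single_mul_single_of_ne _ _ _ _ hai, one_mul, sub_zero]

lemma L2 :
    single i j (1:ℂ) * single j i 1 - single j i 1 * single i j 1
      = single i i 1 - single j j 1 := by
  rw [single_mul_single_same, single_mul_single_same, one_mul]

lemma L3 (hij : i ≠ j) :
    (single i i (1:ℂ) - single j j 1) * single j i 1
      - single j i 1 * (single i i 1 - single j j 1)
      = (-2 : ℂ) • single j i 1 := by
  rw [sub_mul, mul_sub, single_mul_single_of_ne _ _ _ _ hij, single_mul_single_same,
    single_mul_single_same, single_mul_single_of_ne _ _ _ _ hij, smul_single]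
  ext x y
  by_cases h : j = x ∧ i = y <;> simp [single, h] <;> first | norm_num | (split <;> norm_num)

lemma L4 (hab : a ≠ b) :
    single a i (1:ℂ) * single i b 1 - single i b 1 * single a i 1
      = single a b 1 := by
  rw [single_mul_single_same, single_mul_single_of_ne _ _ _ _ (Ne.symm hab), one_mul, sub_zero]
end Brackets

section ZComp
variable {n : ℕ} (Z : Matrix (Fin n) (Fin n) ℂ) (i j : Fin n)

lemma hEZE : single i j (1:ℂ) * Z * single i j 1
    = Z j i • single i j 1 := by
  ext a b
  simp only [mul_apply, single, of_apply, Matrix.smul_apply, smul_eq_mul]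
  by_cases hai : i = a
  · subst hai
    by_cases hbj : j = b
    · subst hbj
      simp [Finset.sum_ite_eq, Finset.sum_ite_eq']
    · simp [hbj]
  · simp [hai]

lemma LZ1 (hij : i ≠ j) :
    (Z * single i j 1 - single i j 1 * Z) * single i j 1
      - single i j 1 * (Z * single i j 1 - single i j 1 * Z)
      = (-(2 * Z j i)) • single i j 1 := by
  have hEE : single i j (1:ℂ) * single i j 1 = 0 :=
    single_mul_single_of_ne _ _ _ _ hij.symm _
  have e1 : Z * single i j 1 * single i j 1 = 0 := by
    rw [mul_assoc, hEE, mul_zero]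
  have e2 : single i j (1:ℂ) * (Z * single i j 1)
      = Z j i • single i j 1 := by rw [← mul_assoc]; exact hEZE Z i j
  have e3 : single i j (1:ℂ) * (single i j 1 * Z) = 0 := by
    rw [← mul_assoc, hEE, zero_mul]
  rw [sub_mul, mul_sub, e1, e2, e3, hEZE, zero_sub, sub_zero]
  module

lemma LZdiag (hd : ∀ a b : Fin n, a ≠ b → Z a b = 0) :
    Z * single i j 1 - single i j 1 * Z
      = (Z i i - Z j j) • single i j 1 := by
  have hZ : Z = Matrix.diagonal (fun a => Z a a) := by
    ext a b
    rcases eq_or_ne a b with rfl | h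
    · simp
    · simp [hd a b h, Matrix.diagonal_apply_ne _ h]
  nth_rewrite 1 [hZ]; nth_rewrite 2 [hZ]
  ext a b
  simp only [Matrix.sub_apply, diagonal_mul, mul_diagonal, Matrix.smul_apply, single, of_apply,
    smul_eq_mul]
  by_cases h : i = a ∧ j = b
  · obtain ⟨rfl, rfl⟩ := h
    simp
  · simp [h]
end ZComp

theorem key {n k : ℕ} (hn : 2 ≤ n) (hk : k < n)
    (ψ : Matrix (Fin n) (Fin n) ℂ →ₗ[ℂ] Matrix (Fin k) (Fin k) ℂ)
    (hψ : ∀ X Y : Matrix (Fin n) (Fin n) ℂ, X.trace = 0 → Y.trace = 0 →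
      ψ (X * Y - Y * X) = ψ X * ψ Y - ψ Y * ψ X) :
    ∀ X : Matrix (Fin n) (Fin n) ℂ, X.trace = 0 → ψ X = 0 := by
  rcases Nat.eq_zero_or_pos k with rfl | hkpos
  · intro X _; ext i; exact i.elim0
  have hn0 : 0 < n := by omega
  -- the "ideal" closure property
  have hbr : ∀ X : Matrix (Fin n) (Fin n) ℂ, X.trace = 0 → ψ X = 0 →
      ∀ Y : Matrix (Fin n) (Fin n) ℂ, Y.trace = 0 → ψ (X * Y - Y * X) = 0 := by
    intro X hX1 hX2 Y hY
    rw [hψ X Y hX1 hY, hX2, zero_mul, mul_zero, sub_zero]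
  -- Step 1 : a nonzero traceless matrix in the kernel
  obtain ⟨Z, hZne, hZtr, hZψ⟩ : ∃ Z : Matrix (Fin n) (Fin n) ℂ,
      Z ≠ 0 ∧ Z.trace = 0 ∧ ψ Z = 0 := by
    set T := Matrix.traceLinearMap (Fin n) ℂ ℂ with hT
    have hsurj : Function.Surjective T := by
      intro c
      refine ⟨single ⟨0, hn0⟩ ⟨0, hn0⟩ c, ?_⟩
      simp [hT, Matrix.traceLinearMap]
    have hfr : Module.finrank ℂ (LinearMap.ker T) = n*n - 1 := by
      have h := LinearMap.finrank_range_add_finrank_ker T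
      rw [LinearMap.range_eq_top.mpr hsurj, finrank_top, Module.finrank_matrix] at h
      simp at h
      omega
    have hninj : ¬ Function.Injective (ψ ∘ₗ (LinearMap.ker T).subtype) := by
      intro hinj
      have hle := LinearMap.finrank_le_finrank_of_injective hinj
      rw [hfr, Module.finrank_matrix] at hle
      simp at hle
      nlinarith
    rw [← LinearMap.ker_eq_bot] at hninj
    obtain ⟨z, hz1, hz2⟩ := Submodule.exists_mem_ne_zero_of_ne_bot hninj
    refine ⟨(z : Matrix (Fin n) (Fin n) ℂ), ?_, z.2, ?_⟩
    · simpa using hz2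
    · simpa using hz1
  -- Step 2 : some off-diagonal elementary matrix is in the kernel
  obtain ⟨i, j, hij, hEij⟩ : ∃ i j : Fin n, i ≠ j ∧ ψ (single i j 1) = 0 := by
    by_cases hod : ∃ a b : Fin n, a ≠ b ∧ Z b a ≠ 0
    · obtain ⟨a, b, hab, hZba⟩ := hod
      have h1 := hbr Z hZtr hZψ (single a b 1)
        (trace_single_eq_of_ne _ _ _ (Ne.symm hab.symm))
      have h2 := hbr _ (by simp [trace_sub, Matrix.trace_mul_comm Z]) h1
        (single a b 1) (trace_single_eq_of_ne _ _ _ (Ne.symm hab.symm))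
      rw [LZ1 Z a b hab, _root_.map_smul, smul_eq_zero] at h2
      refine ⟨a, b, hab, h2.resolve_left ?_⟩
      simpa using hZba
    · push_neg at hod
      have hd : ∀ a b : Fin n, a ≠ b → Z a b = 0 := fun a b h => hod b a (fun e => h e.symm)
      obtain ⟨a, b, hab⟩ : ∃ a b : Fin n, Z a a ≠ Z b b := by
        by_contra hc
        push_neg at hc
        apply hZne
        have hz : Z ⟨0, hn0⟩ ⟨0, hn0⟩ = 0 := by
          have ht : Z.trace = (n : ℂ) * Z ⟨0, hn0⟩ ⟨0, hn0⟩ := by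
            rw [Matrix.trace]
            simp only [Matrix.diag]
            rw [Finset.sum_congr rfl (fun x _ => hc x ⟨0, hn0⟩)]
            simp [mul_comm]
          rw [hZtr] at ht
          have hnne : (n : ℂ) ≠ 0 := by
            simp only [ne_eq, Nat.cast_eq_zero]; omega
          rcases mul_eq_zero.mp ht.symm with h | h
          · exact absurd h hnne
          · exact h
        ext a b
        rcases eq_or_ne a b with rfl | h
        · rw [hc a ⟨0, hn0⟩, hz]; rfl
        · simp [hd a b h]
      have hab' : a ≠ b := by rintro rfl; exact hab rfl
      have h1 := hbr Z hZtr hZψ (single a b 1)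
        (trace_single_eq_of_ne _ _ _ (Ne.symm hab'.symm))
      rw [LZdiag Z a b hd, _root_.map_smul, smul_eq_zero] at h1
      exact ⟨a, b, hab', h1.resolve_left (sub_ne_zero.mpr hab)⟩
  -- Step 3 : propagate to all elementary matrices
  have hswap : ∀ x y : Fin n, x ≠ y → ψ (single x y 1) = 0 →
      ψ (single y x 1) = 0 := by
    intro x y hxy hx
    have hH : ψ (single x x 1 - single y y 1) = 0 := by
      have h := hbr _ (trace_single_eq_of_ne _ _ _ (Ne.symm hxy.symm)) hx
        (single y x 1) (trace_single_eq_of_ne _ _ _ (Ne.symm hxy))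
      rwa [L2 x y] at h
    have h3 := hbr _ (by simp) hH (single y x 1)
      (trace_single_eq_of_ne _ _ _ (Ne.symm hxy))
    rw [L3 x y hxy, _root_.map_smul, smul_eq_zero] at h3
    exact h3.resolve_left (by norm_num)
  have hrow : ∀ c : Fin n, c ≠ i → ψ (single i c 1) = 0 := by
    intro c hc
    rcases eq_or_ne c j with rfl | hcj
    · exact hEij
    · have h := hbr _ (trace_single_eq_of_ne _ _ _ (Ne.symm hij.symm)) hEij
        (single j c 1) (trace_single_eq_of_ne _ _ _ (Ne.symm hcj))
      rwa [L1 i j c hc] at h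
  have hoff : ∀ a b : Fin n, a ≠ b → ψ (single a b 1) = 0 := by
    intro a b hab
    rcases eq_or_ne a i with rfl | hai
    · exact hrow b (Ne.symm hab)
    · have h1 : ψ (single i a 1) = 0 := hrow a hai
      have h2 : ψ (single a i 1) = 0 := hswap i a (Ne.symm hai) h1
      rcases eq_or_ne b i with rfl | hbi
      · exact h2
      · have h := hbr _ (trace_single_eq_of_ne _ _ _ (Ne.symm (Ne.symm hai))) h2
          (single i b 1) (trace_single_eq_of_ne _ _ _ (Ne.symm hbi))
        rwa [L4 i a b hab] at h
  have hdiag : ∀ a b : Fin n, ψ (single a a 1 - single b b 1) = 0 := by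
    intro a b
    rcases eq_or_ne a b with rfl | hab
    · simp
    · have h := hbr _ (trace_single_eq_of_ne _ _ _ (Ne.symm hab.symm)) (hoff a b hab)
        (single b a 1) (trace_single_eq_of_ne _ _ _ (Ne.symm hab))
      rwa [L2 a b] at h
  -- Step 4 : conclude
  intro X hX
  have hEa : ∀ a : Fin n, ψ (single a a 1) = ψ (single ⟨0, hn0⟩ ⟨0, hn0⟩ 1) := by
    intro a
    have h := hdiag a ⟨0, hn0⟩
    rw [map_sub, sub_eq_zero] at h
    exact h
  have hrep : X = ∑ a : Fin n, ∑ b : Fin n, X a b • single a b 1 := by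
    conv_lhs => rw [matrix_eq_sum_single X]
    refine Finset.sum_congr rfl fun a _ => Finset.sum_congr rfl fun b _ => ?_
    rw [smul_single, smul_eq_mul, mul_one]
  rw [hrep, map_sum]
  have hsum : ∀ a : Fin n, ψ (∑ b : Fin n, X a b • single a b 1)
      = X a a • ψ (single ⟨0, hn0⟩ ⟨0, hn0⟩ 1) := by
    intro a
    rw [map_sum, Finset.sum_eq_single a]
    · rw [_root_.map_smul, hEa a]
    · intro b _ hb
      rw [_root_.map_smul, hoff a b (Ne.symm hb), smul_zero]
    · intro h; exact absurd (Finset.mem_univ a) h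
  rw [Finset.sum_congr rfl (fun a _ => hsum a), ← Finset.sum_smul,
    show (∑ a : Fin n, X a a) = X.trace from rfl, hX, zero_smul]

end SLsimple

namespace SUaux

variable {p q : ℕ}

lemma J_herm : (Jpq p q)ᴴ = Jpq p q := by
  have h : (star fun i : Fin (p+q) => if (i:ℕ) < p then (-1:ℂ) else 1)
      = fun i : Fin (p+q) => if (i:ℕ) < p then (-1:ℂ) else 1 := by
    funext i; by_cases h : (i:ℕ) < p <;> simp [h]
  rw [Jpq, diagonal_conjTranspose, h]

lemma J_mul_J : Jpq p q * Jpq p q = 1 := by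
  have h : (fun i : Fin (p+q) => (if (i:ℕ) < p then (-1:ℂ) else 1)
      * (if (i:ℕ) < p then (-1:ℂ) else 1)) = fun _ => 1 := by
    funext i; by_cases h : (i:ℕ) < p <;> simp [h]
  rw [Jpq, diagonal_mul_diagonal, h, diagonal_one]

/-- The conjugation whose fixed points (among traceless matrices) give su(p,q). -/
noncomputable def sig (p q : ℕ) (X : Matrix (Fin (p+q)) (Fin (p+q)) ℂ) :
    Matrix (Fin (p+q)) (Fin (p+q)) ℂ :=
  -(Jpq p q * Xᴴ * Jpq p q)

lemma mem_su_iff {X : Matrix (Fin (p+q)) (Fin (p+q)) ℂ} :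
    X ∈ su p q ↔ sig p q X = X ∧ X.trace = 0 := by
  constructor
  · rintro ⟨h1, h2⟩
    refine ⟨?_, h2⟩
    have h3 : Xᴴ * Jpq p q = -(Jpq p q * X) := eq_neg_of_add_eq_zero_left h1
    unfold sig
    rw [mul_assoc, h3, mul_neg, neg_neg, ← mul_assoc, J_mul_J, one_mul]
  · rintro ⟨h1, h2⟩
    refine ⟨?_, h2⟩
    have h3 : Jpq p q * X = -(Xᴴ * Jpq p q) := by
      conv_lhs => rw [← h1]
      rw [sig, mul_neg, ← mul_assoc, ← mul_assoc, J_mul_J, one_mul]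
    rw [h3, add_neg_cancel]

lemma sig_sig (X : Matrix (Fin (p+q)) (Fin (p+q)) ℂ) : sig p q (sig p q X) = X := by
  unfold sig
  rw [conjTranspose_neg, mul_neg, neg_mul, neg_neg, conjTranspose_mul, conjTranspose_mul,
    J_herm, conjTranspose_conjTranspose]
  -- goal should now be J * (J * (X * J)) * J = X  (up to assoc)
  rw [← mul_assoc, ← mul_assoc, J_mul_J, one_mul, mul_assoc, J_mul_J, mul_one]

lemma sig_add (X Y : Matrix (Fin (p+q)) (Fin (p+q)) ℂ) :
    sig p q (X + Y) = sig p q X + sig p q Y := by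
  unfold sig
  rw [conjTranspose_add, mul_add, add_mul, neg_add]

lemma sig_sub (X Y : Matrix (Fin (p+q)) (Fin (p+q)) ℂ) :
    sig p q (X - Y) = sig p q X - sig p q Y := by
  unfold sig
  rw [conjTranspose_sub, mul_sub, sub_mul, neg_sub, neg_sub_neg]

lemma sig_rsmul (r : ℝ) (X : Matrix (Fin (p+q)) (Fin (p+q)) ℂ) :
    sig p q (r • X) = r • sig p q X := by
  unfold sig
  rw [conjTranspose_smul, star_trivial, mul_smul_comm, smul_mul_assoc, smul_neg]

lemma sig_I (X : Matrix (Fin (p+q)) (Fin (p+q)) ℂ) :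
    sig p q (Complex.I • X) = -(Complex.I • sig p q X) := by
  unfold sig
  rw [conjTranspose_smul, Complex.star_def, Complex.conj_I, neg_smul, mul_neg, neg_mul,
    mul_smul_comm, smul_mul_assoc, smul_neg, neg_neg]

lemma trace_sig (X : Matrix (Fin (p+q)) (Fin (p+q)) ℂ) :
    (sig p q X).trace = -star X.trace := by
  unfold sig
  rw [trace_neg, Matrix.trace_mul_comm, ← mul_assoc, J_mul_J, one_mul, trace_conjTranspose]

lemma sig_mul (X Y : Matrix (Fin (p+q)) (Fin (p+q)) ℂ) :
    sig p q (X * Y) = -(sig p q Y * sig p q X) := by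
  unfold sig
  rw [neg_mul_neg, conjTranspose_mul]
  rw [show Jpq p q * Yᴴ * Jpq p q * (Jpq p q * Xᴴ * Jpq p q)
      = Jpq p q * Yᴴ * (Jpq p q * Jpq p q) * Xᴴ * Jpq p q by
    simp only [mul_assoc], J_mul_J, mul_one]
  simp only [mul_assoc]

/-- su is closed under commutator brackets. -/
lemma su_bracket {X Y : Matrix (Fin (p+q)) (Fin (p+q)) ℂ}
    (hX : X ∈ su p q) (hY : Y ∈ su p q) : X * Y - Y * X ∈ su p q := by
  rw [mem_su_iff] at *
  constructor
  · rw [sig_sub, sig_mul, sig_mul, hX.1, hY.1]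
    abel
  · rw [trace_sub, Matrix.trace_mul_comm, sub_self]

lemma su_add {X Y : Matrix (Fin (p+q)) (Fin (p+q)) ℂ}
    (hX : X ∈ su p q) (hY : Y ∈ su p q) : X + Y ∈ su p q := by
  rw [mem_su_iff] at *
  exact ⟨by rw [sig_add, hX.1, hY.1], by rw [trace_add, hX.2, hY.2, add_zero]⟩

lemma su_sub {X Y : Matrix (Fin (p+q)) (Fin (p+q)) ℂ}
    (hX : X ∈ su p q) (hY : Y ∈ su p q) : X - Y ∈ su p q := by
  rw [mem_su_iff] at *
  exact ⟨by rw [sig_sub, hX.1, hY.1], by rw [trace_sub, hX.2, hY.2, sub_zero]⟩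

/-- The "real part" projection. -/
noncomputable def Pm (p q : ℕ) (X : Matrix (Fin (p+q)) (Fin (p+q)) ℂ) :
    Matrix (Fin (p+q)) (Fin (p+q)) ℂ :=
  ((1:ℝ)/2) • (X + sig p q X)

/-- The "imaginary part" projection. -/
noncomputable def Qm (p q : ℕ) (X : Matrix (Fin (p+q)) (Fin (p+q)) ℂ) :
    Matrix (Fin (p+q)) (Fin (p+q)) ℂ :=
  (-(1:ℝ)/2) • (Complex.I • (X - sig p q X))

lemma Pm_add (X Y) : Pm p q (X + Y) = Pm p q X + Pm p q Y := by
  unfold Pm; rw [sig_add]; module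

lemma Qm_add (X Y) : Qm p q (X + Y) = Qm p q X + Qm p q Y := by
  unfold Qm
  rw [sig_add]
  rw [show X + Y - (sig p q X + sig p q Y) = (X - sig p q X) + (Y - sig p q Y) by abel,
    smul_add, smul_add]

lemma Pm_rsmul (r : ℝ) (X) : Pm p q (r • X) = r • Pm p q X := by
  unfold Pm
  rw [sig_rsmul, ← smul_add, smul_comm]

lemma Qm_rsmul (r : ℝ) (X) : Qm p q (r • X) = r • Qm p q X := by
  unfold Qm
  rw [sig_rsmul, ← smul_sub, smul_comm Complex.I r, smul_comm]

lemma ismul_ismul {m : Type*} [Fintype m] (M : Matrix m m ℂ) :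
    Complex.I • Complex.I • M = -M := by
  rw [smul_smul, Complex.I_mul_I, neg_one_smul]

lemma Pm_I (X) : Pm p q (Complex.I • X) = -Qm p q X := by
  unfold Pm Qm
  rw [sig_I]
  module

lemma Qm_I (X) : Qm p q (Complex.I • X) = Pm p q X := by
  unfold Pm Qm
  rw [sig_I]
  rw [show Complex.I • X - -(Complex.I • sig p q X) = Complex.I • (X + sig p q X) by
    rw [smul_add]; abel]
  rw [ismul_ismul]
  module

lemma Pm_Qm_decomp (X) : X = Pm p q X + Complex.I • Qm p q X := by
  unfold Pm Qm
  rw [smul_comm Complex.I, ismul_ismul]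
  module

lemma Pm_mem {X} (hX : X.trace = 0) : Pm p q X ∈ su p q := by
  rw [mem_su_iff]
  constructor
  · unfold Pm
    rw [sig_rsmul, sig_add, sig_sig]
    module
  · unfold Pm
    rw [trace_smul, trace_add, trace_sig, hX, star_zero, neg_zero, add_zero, smul_zero]

lemma Qm_mem {X} (hX : X.trace = 0) : Qm p q X ∈ su p q := by
  rw [mem_su_iff]
  constructor
  · unfold Qm
    rw [sig_rsmul, sig_I, sig_sub, sig_sig]
    module
  · unfold Qm
    rw [trace_smul, trace_smul, trace_sub, trace_sig, hX, star_zero, neg_zero, sub_zero,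
      smul_zero, smul_zero]

lemma Pm_of_mem {X} (hX : X ∈ su p q) : Pm p q X = X := by
  rw [mem_su_iff] at hX
  unfold Pm
  rw [hX.1]
  module

lemma Qm_of_mem {X} (hX : X ∈ su p q) : Qm p q X = 0 := by
  rw [mem_su_iff] at hX
  unfold Qm
  rw [hX.1, sub_self, smul_zero, smul_zero]

end SUaux

namespace SUaux

lemma brexp {m : ℕ} (a b c d : Matrix (Fin m) (Fin m) ℂ) :
    (a + Complex.I • b) * (c + Complex.I • d) - (c + Complex.I • d) * (a + Complex.I • b)
      = ((a*c - c*a) - (b*d - d*b)) + Complex.I • ((a*d - d*a) + (b*c - c*b)) := by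
  simp only [mul_add, add_mul, smul_mul_assoc, mul_smul_comm, smul_smul, Complex.I_mul_I,
    neg_one_smul, smul_add, smul_sub]
  abel

section Complexify
variable {p q k : ℕ}
  (φ : Matrix (Fin (p + q)) (Fin (p + q)) ℂ →ₗ[ℝ] Matrix (Fin k) (Fin k) ℂ)

noncomputable def psiFun (X : Matrix (Fin (p+q)) (Fin (p+q)) ℂ) : Matrix (Fin k) (Fin k) ℂ :=
  φ (Pm p q X) + Complex.I • φ (Qm p q X)

lemma psiFun_add (X Y : Matrix (Fin (p+q)) (Fin (p+q)) ℂ) :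
    psiFun φ (X + Y) = psiFun φ X + psiFun φ Y := by
  unfold psiFun
  rw [Pm_add, Qm_add, map_add, map_add, smul_add]
  abel

lemma psiFun_rsmul (r : ℝ) (X : Matrix (Fin (p+q)) (Fin (p+q)) ℂ) :
    psiFun φ (r • X) = r • psiFun φ X := by
  unfold psiFun
  rw [Pm_rsmul, Qm_rsmul, _root_.map_smul, _root_.map_smul, smul_add, smul_comm]

lemma psiFun_I (X : Matrix (Fin (p+q)) (Fin (p+q)) ℂ) :
    psiFun φ (Complex.I • X) = Complex.I • psiFun φ X := by
  unfold psiFun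
  rw [Pm_I, Qm_I, map_neg, smul_add, ismul_ismul]
  abel

noncomputable def psi : Matrix (Fin (p+q)) (Fin (p+q)) ℂ →ₗ[ℂ] Matrix (Fin k) (Fin k) ℂ where
  toFun := psiFun φ
  map_add' := psiFun_add φ
  map_smul' := by
    intro c X
    simp only [RingHom.id_apply]
    have hcs : ∀ (r : ℝ) (M : Matrix (Fin (p+q)) (Fin (p+q)) ℂ), ((r:ℂ)) • M = r • M :=
      fun r M => by rw [← Complex.coe_algebraMap]; exact algebraMap_smul ℂ r M
    have hcs' : ∀ (r : ℝ) (M : Matrix (Fin k) (Fin k) ℂ), ((r:ℂ)) • M = r • M :=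
      fun r M => by rw [← Complex.coe_algebraMap]; exact algebraMap_smul ℂ r M
    have hc : c • X = (c.re:ℂ) • X + (c.im:ℂ) • (Complex.I • X) := by
      rw [smul_smul, ← add_smul, Complex.re_add_im]
    rw [hc, psiFun_add, hcs, hcs, psiFun_rsmul, psiFun_rsmul, psiFun_I, ← hcs', ← hcs',
      smul_smul, ← add_smul, Complex.re_add_im]

lemma psiFun_hom
    (hφ : ∀ X ∈ su p q, ∀ Y ∈ su p q,
      φ (X * Y - Y * X) = φ X * φ Y - φ Y * φ X)
    (X Y : Matrix (Fin (p+q)) (Fin (p+q)) ℂ) (hX : X.trace = 0) (hY : Y.trace = 0) :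
    psiFun φ (X * Y - Y * X) = psiFun φ X * psiFun φ Y - psiFun φ Y * psiFun φ X := by
  set A := Pm p q X with hA'
  set B := Qm p q X with hB'
  set C := Pm p q Y with hC'
  set D := Qm p q Y with hD'
  have hA : A ∈ su p q := Pm_mem hX
  have hB : B ∈ su p q := Qm_mem hX
  have hC : C ∈ su p q := Pm_mem hY
  have hD : D ∈ su p q := Qm_mem hY
  have hU : (A*C - C*A) - (B*D - D*B) ∈ su p q :=
    su_sub (su_bracket hA hC) (su_bracket hB hD)
  have hV : (A*D - D*A) + (B*C - C*B) ∈ su p q :=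
    su_add (su_bracket hA hD) (su_bracket hB hC)
  have hXY : X*Y - Y*X
      = ((A*C - C*A) - (B*D - D*B)) + Complex.I • ((A*D - D*A) + (B*C - C*B)) := by
    conv_lhs => rw [Pm_Qm_decomp (p := p) (q := q) X, Pm_Qm_decomp (p := p) (q := q) Y]
    exact brexp A B C D
  have hP' : Pm p q (X*Y - Y*X) = (A*C - C*A) - (B*D - D*B) := by
    rw [hXY, Pm_add, Pm_of_mem hU, Pm_I, Qm_of_mem hV, neg_zero, add_zero]
  have hQ' : Qm p q (X*Y - Y*X) = (A*D - D*A) + (B*C - C*B) := by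
    rw [hXY, Qm_add, Qm_of_mem hU, Qm_I, Pm_of_mem hV, zero_add]
  unfold psiFun
  rw [hP', hQ', ← hA', ← hB', ← hC', ← hD']
  rw [map_sub, hφ A hA C hC, hφ B hB D hD, map_add, hφ A hA D hD, hφ B hB C hC,
    brexp (φ A) (φ B) (φ C) (φ D)]

end Complexify
end SUaux


/-- If p + q ≥ 2 and p + q > k, then any real Lie algebra homomorphism
su(p,q) → gl(k,ℂ) is trivial. -/
theorem stmt_4 (p q k : ℕ) (hpq : 2 ≤ p + q) (hk : k < p + q)
    (φ : Matrix (Fin (p + q)) (Fin (p + q)) ℂ →ₗ[ℝ] Matrix (Fin k) (Fin k) ℂ)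
    (hφ : ∀ X ∈ su p q, ∀ Y ∈ su p q,
      φ (X * Y - Y * X) = φ X * φ Y - φ Y * φ X) :
    ∀ X ∈ su p q, φ X = 0 := by
  intro X hX
  have hhom : ∀ A B : Matrix (Fin (p + q)) (Fin (p + q)) ℂ, A.trace = 0 → B.trace = 0 →
      (SUaux.psi φ) (A * B - B * A) = (SUaux.psi φ) A * (SUaux.psi φ) B
        - (SUaux.psi φ) B * (SUaux.psi φ) A :=
    fun A B hA hB => SUaux.psiFun_hom φ hφ A B hA hB
  have h := SLsimple.key hpq hk (SUaux.psi φ) hhom X hX.2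
  have he : (SUaux.psi φ) X = φ X := by
    show SUaux.psiFun φ X = φ X
    unfold SUaux.psiFun
    rw [SUaux.Pm_of_mem hX, SUaux.Qm_of_mem hX, map_zero, smul_zero, add_zero]
  rw [← he]
  exact h
end

section
/- For n > 1, every biholomorphic automorphism f of D^{n,1} = {z ∈ ℂ^{n+1} : -|z₀|² + |z₁|² + ⋯ + |zₙ|² > 0} extends to a biholomorphic automorphism of ℂ^{n+1}. -/
open Metric Set Function Complex

/-- The domain D^{n,1} = {z ∈ ℂ^{n+1} : -|z₀|² + |z₁|² + ⋯ + |zₙ|² > 0}. -/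
def Dn1 (n : ℕ) : Set (Fin (n + 1) → ℂ) :=
  {z | ‖z 0‖ ^ 2 < ∑ i : Fin n, ‖z i.succ‖ ^ 2}

set_option linter.unusedSectionVars false
set_option maxHeartbeats 1000000
set_option linter.unusedVariables false

section Helpers


variable {H : Type*} [NormedAddCommGroup H] [NormedSpace ℂ H]
variable {E : Type*} [NormedAddCommGroup E] [NormedSpace ℂ E] [CompleteSpace E]

/-- Cauchy-type estimate: a holomorphic function bounded by `M` on a ball of radius `ε`
has `‖fderiv‖ ≤ (2*M+1)/ε` at the center. -/
lemma norm_fderiv_le_of_ball {f : H → E} {q : H} {ε M : ℝ} (hε : 0 < ε)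
    (hd : ∀ x ∈ ball q ε, DifferentiableAt ℂ f x)
    (hM : ∀ x ∈ ball q ε, ‖f x‖ ≤ M) : ‖fderiv ℂ f q‖ ≤ (2 * M + 1) / ε := by
  have hqq : q ∈ ball q ε := mem_ball_self hε
  have hM0 : 0 ≤ M := le_trans (norm_nonneg _) (hM q hqq)
  apply ContinuousLinearMap.opNorm_le_bound _ (by positivity)
  intro v
  rcases eq_or_ne v 0 with rfl | hv
  · simp
  have hvn : 0 < ‖v‖ := norm_pos_iff.2 hv
  set g : ℂ → E := fun t => f (q + t • v) with hg
  have hmem : ∀ t : ℂ, t ∈ ball (0:ℂ) (ε / ‖v‖) → q + t • v ∈ ball q ε := by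
    intro t ht
    simp only [mem_ball, dist_eq_norm] at ht ⊢
    have : ‖q + t • v - q‖ = ‖t‖ * ‖v‖ := by simp [norm_smul]
    rw [this]
    calc ‖t‖ * ‖v‖ < (ε / ‖v‖) * ‖v‖ := by
          apply mul_lt_mul_of_pos_right _ hvn
          simpa using ht
      _ = ε := by field_simp
  have haff : ∀ t : ℂ, HasDerivAt (fun s : ℂ => q + s • v) v t := by
    intro t
    simpa using ((hasDerivAt_id t).smul_const v).const_add q
  have hgd : DifferentiableOn ℂ g (ball (0:ℂ) (ε / ‖v‖)) := by
    intro t ht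
    exact (((hd _ (hmem t ht)).hasFDerivAt.comp_hasDerivAt t (haff t)).differentiableAt).differentiableWithinAt
  have hmaps : MapsTo g (ball (0:ℂ) (ε / ‖v‖)) (ball (g 0) (2 * M + 1)) := by
    intro t ht
    simp only [mem_ball, dist_eq_norm]
    have h1 : ‖g t‖ ≤ M := hM _ (hmem t ht)
    have h2 : ‖g 0‖ ≤ M := hM _ (by simpa using hmem 0 (by simpa using div_pos hε hvn))
    calc ‖g t - g 0‖ ≤ ‖g t‖ + ‖g 0‖ := norm_sub_le _ _
      _ < 2 * M + 1 := by linarith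
  have hSch := Complex.norm_deriv_le_div_of_mapsTo_ball hgd (hmaps.mono_right ball_subset_closedBall) (div_pos hε hvn)
  have hder : HasDerivAt g (fderiv ℂ f q v) 0 := by
    have h0 : HasFDerivAt f (fderiv ℂ f q) (q + (0:ℂ) • v) := by
      simpa using (hd q hqq).hasFDerivAt
    simpa [hg, Function.comp_def] using h0.comp_hasDerivAt (0:ℂ) (haff 0)
  rw [← hder.deriv]
  calc ‖deriv g 0‖ ≤ (2 * M + 1) / (ε / ‖v‖) := hSch
    _ = (2 * M + 1) / ε * ‖v‖ := by field_simp

/-- Identity theorem on a convex open set from agreement on a small ball. -/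
lemma eqOn_of_convex {U : Set H} (hU : IsOpen U) (hc : Convex ℝ U)
    {F G : H → E} (hF : DifferentiableOn ℂ F U) (hG : DifferentiableOn ℂ G U)
    {w₀ : H} {δ : ℝ} (hδ : 0 < δ) (hball : ball w₀ δ ⊆ U)
    (heq : EqOn F G (ball w₀ δ)) : EqOn F G U := by
  intro z hz
  have hw₀U : w₀ ∈ U := hball (mem_ball_self hδ)
  set v : H := z - w₀ with hv
  set γ : ℂ → H := fun t => w₀ + t • v with hγ
  set Ω : Set ℂ := γ ⁻¹' U with hΩ
  have hγc : Continuous γ := by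
    exact continuous_const.add (continuous_id.smul continuous_const)
  have hΩo : IsOpen Ω := hU.preimage hγc
  have hΩconv : Convex ℝ Ω := by
    intro t₁ h₁ t₂ h₂ a b ha hb hab
    have key : γ (a • t₁ + b • t₂) = a • γ t₁ + b • γ t₂ := by
      have e1 : a • (w₀ + t₁ • v) + b • (w₀ + t₂ • v)
          = (a + b) • w₀ + (a • t₁ + b • t₂) • v := by
        simp only [smul_add, add_smul, ← smul_assoc]
        abel
      simp only [hγ]
      rw [e1, hab, one_smul]
    have : γ (a • t₁ + b • t₂) ∈ U := by
      rw [key]; exact hc h₁ h₂ ha hb hab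
    exact this
  have h0 : (0:ℂ) ∈ Ω := by simp [hΩ, hγ, hw₀U]
  have h1 : (1:ℂ) ∈ Ω := by simp [hΩ, hγ, hv, hz]
  set φ : ℂ → E := fun t => F (γ t) - G (γ t) with hφ
  have hγd : Differentiable ℂ γ := by
    exact (differentiable_const _).add (differentiable_id.smul_const v)
  have hφd : DifferentiableOn ℂ φ Ω := by
    apply DifferentiableOn.sub
    · exact hF.comp hγd.differentiableOn (fun t ht => ht)
    · exact hG.comp hγd.differentiableOn (fun t ht => ht)
  have hφa : AnalyticOnNhd ℂ φ Ω := hφd.analyticOnNhd hΩo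
  have hev : φ =ᶠ[nhds 0] 0 := by
    have hδ' : 0 < δ / (‖v‖ + 1) := by positivity
    have : ∀ t : ℂ, ‖t‖ < δ / (‖v‖ + 1) → φ t = 0 := by
      intro t ht
      have hmem : γ t ∈ ball w₀ δ := by
        simp only [mem_ball, dist_eq_norm, hγ]
        have : ‖w₀ + t • v - w₀‖ = ‖t‖ * ‖v‖ := by simp [norm_smul]
        rw [this]
        have hv1 : ‖v‖ < ‖v‖ + 1 := by linarith
        calc ‖t‖ * ‖v‖ ≤ ‖t‖ * (‖v‖ + 1) := by
              apply mul_le_mul_of_nonneg_left (by linarith) (norm_nonneg t)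
          _ < δ / (‖v‖ + 1) * (‖v‖ + 1) := by
              apply mul_lt_mul_of_pos_right ht (by positivity)
          _ = δ := by field_simp
      simp only [hφ, heq hmem, sub_self, Pi.zero_apply]
    filter_upwards [Metric.ball_mem_nhds (0:ℂ) hδ'] with t ht
    exact this t (by simpa [dist_eq_norm] using ht)
  have := hφa.eqOn_zero_of_preconnected_of_eventuallyEq_zero hΩconv.isPreconnected h0 hev h1
  have h1' : F (γ 1) - G (γ 1) = 0 := this
  have : γ 1 = z := by simp [hγ, hv]
  rw [this] at h1'
  exact sub_eq_zero.1 h1'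

end Helpers

namespace Dn1Aux


variable {n : ℕ}

abbrev EE (n : ℕ) := Fin (n + 1) → ℂ

abbrev ll (n : ℕ) : Fin (n + 1) := Fin.last n

lemma ll_ne_zero (hn : 1 ≤ n) : ll n ≠ 0 := by
  simp [ll, Fin.ext_iff]; omega

lemma isOpen_Dn1 : IsOpen (Dn1 n) := by
  apply isOpen_lt
  · exact ((continuous_apply (0 : Fin (n+1))).norm.pow 2)
  · exact continuous_finset_sum _ fun i _ => ((continuous_apply i.succ).norm.pow 2)

/-- the index in `Fin n` whose successor is `ll n` -/
def jj (n : ℕ) (hn : 1 ≤ n) : Fin n := ⟨n - 1, by omega⟩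

lemma jj_succ (hn : 1 ≤ n) : (jj n hn).succ = ll n := by
  simp [jj, ll, Fin.ext_iff]; omega

lemma sq_norm_ll_le (hn : 1 ≤ n) (x : EE n) :
    ‖x (ll n)‖ ^ 2 ≤ ∑ i : Fin n, ‖x i.succ‖ ^ 2 := by
  have := Finset.single_le_sum (f := fun i : Fin n => ‖x i.succ‖ ^ 2)
    (fun i _ => by positivity) (Finset.mem_univ (jj n hn))
  simp only [jj_succ hn] at this
  exact this

lemma mem_Dn1_of_lt (hn : 1 ≤ n) {x : EE n} (h : ‖x 0‖ < ‖x (ll n)‖) : x ∈ Dn1 n := by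
  have h2 : ‖x 0‖ ^ 2 < ‖x (ll n)‖ ^ 2 := by
    have := norm_nonneg (x 0); nlinarith
  exact lt_of_lt_of_le h2 (sq_norm_ll_le hn x)

lemma update_eq_add (z : EE n) (w : ℂ) :
    Function.update z (ll n) w = z + (w - z (ll n)) • (Pi.single (ll n) 1 : EE n) := by
  funext i
  by_cases h : i = ll n
  · subst h; simp
  · simp [Function.update_of_ne h, Pi.single_apply, h]

lemma norm_update_sub_update (z z' : EE n) (w : ℂ) :
    ‖Function.update z (ll n) w - Function.update z' (ll n) w‖ ≤ ‖z - z'‖ := by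
  apply pi_norm_le_iff_of_nonneg (norm_nonneg _) |>.2
  intro i
  simp only [Pi.sub_apply]
  by_cases h : i = ll n
  · subst h; simp
  · rw [Function.update_of_ne h, Function.update_of_ne h]
    have := norm_le_pi_norm (z - z') i
    simpa using this





lemma isPreconnected_Dn1 (hn : 1 ≤ n) : IsPreconnected (Dn1 n) := by
  classical
  set ψ : ℂ × (Fin n → ℂ) → EE n :=
    fun p => Fin.cons (p.1 * (Real.sqrt (∑ i : Fin n, ‖p.2 i‖ ^ 2) : ℝ)) p.2 with hψ
  have hψc : Continuous ψ := by
    apply continuous_pi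
    intro i
    refine Fin.cases ?_ ?_ i
    · simp only [hψ, Fin.cons_zero]
      exact continuous_fst.mul (Complex.continuous_ofReal.comp
        ((continuous_finset_sum _ fun i _ =>
          ((continuous_apply i).comp continuous_snd).norm.pow 2).sqrt))
    · intro i
      simp only [hψ, Fin.cons_succ]
      exact (continuous_apply i).comp continuous_snd
  set S : Set (ℂ × (Fin n → ℂ)) := (ball (0:ℂ) 1) ×ˢ ({0}ᶜ : Set (Fin n → ℂ)) with hS
  have hSpre : IsPreconnected S := by
    apply IsPreconnected.prod (convex_ball _ _).isPreconnected
    have hrank : 1 < Module.rank ℝ (Fin n → ℂ) := by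
      have hfr : Module.finrank ℝ (Fin n → ℂ) = 2 * n := by
        rw [Module.finrank_pi_fintype]
        simp [Complex.finrank_real_complex, mul_comm]
      have := Module.finrank_eq_rank ℝ (Fin n → ℂ)
      rw [← this, hfr]
      exact_mod_cast by omega
    have := isPathConnected_compl_singleton_of_one_lt_rank hrank (0 : Fin n → ℂ)
    exact this.isConnected.isPreconnected
  have himg : ψ '' S = Dn1 n := by
    apply Subset.antisymm
    · rintro _ ⟨⟨w, u⟩, ⟨hw, hu⟩, rfl⟩
      have hu' : u ≠ 0 := hu
      have hupos : 0 < ∑ i : Fin n, ‖u i‖ ^ 2 := by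
        rcases Function.ne_iff.1 hu' with ⟨i, hi⟩
        exact Finset.sum_pos' (fun i _ => by positivity)
          ⟨i, Finset.mem_univ i, pow_pos (norm_pos_iff.2 hi) 2⟩
      set s : ℝ := Real.sqrt (∑ i : Fin n, ‖u i‖ ^ 2) with hs
      have hspos : 0 < s := Real.sqrt_pos.2 hupos
      have hssq : s ^ 2 = ∑ i : Fin n, ‖u i‖ ^ 2 := Real.sq_sqrt hupos.le
      simp only [Dn1, mem_setOf_eq, hψ, Fin.cons_zero, Fin.cons_succ]
      have h0 : ‖w * (s:ℂ)‖ ^ 2 = ‖w‖ ^ 2 * s ^ 2 := by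
        rw [norm_mul]
        simp [mul_pow]
      rw [h0, hssq]
      have hw1 : ‖w‖ < 1 := by simpa [dist_eq_norm] using hw
      have hw2 : ‖w‖ ^ 2 < 1 := by nlinarith [norm_nonneg w]
      calc ‖w‖ ^ 2 * ∑ i : Fin n, ‖u i‖ ^ 2 < 1 * ∑ i : Fin n, ‖u i‖ ^ 2 :=
            mul_lt_mul_of_pos_right hw2 hupos
        _ = ∑ i : Fin n, ‖u i‖ ^ 2 := one_mul _
    · intro z hz
      simp only [Dn1, mem_setOf_eq] at hz
      have hpos : 0 < ∑ i : Fin n, ‖z i.succ‖ ^ 2 :=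
        lt_of_le_of_lt (by positivity) hz
      set u : Fin n → ℂ := fun i => z i.succ with hu
      set s : ℝ := Real.sqrt (∑ i : Fin n, ‖u i‖ ^ 2) with hs
      have hsum : ∑ i : Fin n, ‖u i‖ ^ 2 = ∑ i : Fin n, ‖z i.succ‖ ^ 2 := rfl
      have hspos : 0 < s := Real.sqrt_pos.2 (by rw [hsum]; exact hpos)
      have hssq : s ^ 2 = ∑ i : Fin n, ‖z i.succ‖ ^ 2 := by
        rw [hs, hsum]; exact Real.sq_sqrt hpos.le
      refine ⟨⟨z 0 / (s:ℂ), u⟩, ⟨?_, ?_⟩, ?_⟩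
      · simp only [mem_ball, dist_eq_norm, sub_zero, norm_div]
        rw [Complex.norm_real, Real.norm_eq_abs, abs_of_pos hspos,
          div_lt_one hspos]
        have h1 : ‖z 0‖ ^ 2 < s ^ 2 := by rw [hssq]; exact hz
        have := norm_nonneg (z 0)
        nlinarith
      · simp only [mem_compl_iff, mem_singleton_iff]
        intro h0
        have hzero : ∑ i : Fin n, ‖u i‖ ^ 2 = 0 := by
          rw [h0]; simp
        rw [hsum] at hzero
        linarith
      · funext i
        refine Fin.cases ?_ ?_ i
        · simp only [hψ, Fin.cons_zero]
          rw [div_mul_cancel₀]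
          exact_mod_cast hspos.ne'
        · intro i; simp [hψ, Fin.cons_succ, hu]
  rw [← himg]
  exact hSpre.image ψ hψc.continuousOn

/-- sum splitting for an update at the last coordinate -/
lemma sum_update (hn : 1 ≤ n) (z : EE n) (w : ℂ) :
    ∑ i : Fin n, ‖Function.update z (ll n) w i.succ‖ ^ 2
      = ‖w‖ ^ 2 + ∑ i ∈ Finset.univ.erase (jj n hn), ‖z i.succ‖ ^ 2 := by
  classical
  rw [← Finset.add_sum_erase _ _ (Finset.mem_univ (jj n hn))]
  congr 1
  · rw [jj_succ hn]; simp
  · apply Finset.sum_congr rfl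
    intro i hi
    have hne : i.succ ≠ ll n := by
      rw [← jj_succ hn]
      exact fun h => (Finset.mem_erase.1 hi).1 (Fin.succ_injective _ h)
    rw [Function.update_of_ne hne]

lemma mem_Dn1_update (hn : 1 ≤ n) {z : EE n} (w : ℂ)
    (h : ‖z 0‖ ^ 2 < ‖w‖ ^ 2 + ∑ i ∈ Finset.univ.erase (jj n hn), ‖z i.succ‖ ^ 2) :
    Function.update z (ll n) w ∈ Dn1 n := by
  simp only [Dn1, mem_setOf_eq]
  rw [Function.update_of_ne (Ne.symm (ll_ne_zero hn)), sum_update hn]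
  exact h

/-- The Cauchy-integral extension with circle radius `R`. -/
noncomputable def extMap (n : ℕ) (f : EE n → EE n) (R : ℝ) (z : EE n) : EE n :=
  (2 * Real.pi * Complex.I : ℂ)⁻¹ •
    ∮ w in C(0, R), (w - z (ll n))⁻¹ • f (Function.update z (ll n) w)

/-- On the region where the slice is entire, `extMap` agrees with `f`. -/
lemma extMap_eq (hn : 1 ≤ n) {f : EE n → EE n} (hf : DifferentiableOn ℂ f (Dn1 n))
    {R : ℝ} (hR : 0 < R) {z : EE n} (hz : ‖z (ll n)‖ < R)
    (hzW : ‖z 0‖ ^ 2 < ∑ i ∈ Finset.univ.erase (jj n hn), ‖z i.succ‖ ^ 2) :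
    extMap n f R z = f z := by
  have hupd : ∀ w : ℂ, Function.update z (ll n) w ∈ Dn1 n := by
    intro w
    apply mem_Dn1_update hn
    have : (0:ℝ) ≤ ‖w‖ ^ 2 := by positivity
    linarith
  have hgdiff : ∀ w : ℂ, DifferentiableAt ℂ (fun w' => f (Function.update z (ll n) w')) w := by
    intro w
    have h1 : DifferentiableAt ℂ f (Function.update z (ll n) w) :=
      hf.differentiableAt (isOpen_Dn1.mem_nhds (hupd w))
    have h2 : DifferentiableAt ℂ (fun w' : ℂ => Function.update z (ll n) w') w := by
      have : (fun w' : ℂ => Function.update z (ll n) w')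
          = fun w' : ℂ => z + (w' - z (ll n)) • (Pi.single (ll n) 1 : EE n) := by
        funext w'; exact update_eq_add z w'
      rw [this]
      apply DifferentiableAt.const_add
      exact ((differentiableAt_id.sub_const _).smul_const _)
    exact h1.comp w h2
  have hcauchy := DifferentiableOn.circleIntegral_sub_inv_smul
    (c := 0) (R := R) (f := fun w => f (Function.update z (ll n) w))
    (fun w _ => (hgdiff w).differentiableWithinAt)
    (w := z (ll n)) (by simpa [mem_ball, dist_eq_norm] using hz)
  simp only [extMap]
  rw [hcauchy]
  simp only [Function.update_eq_self]
  rw [smul_smul, inv_mul_cancel₀, one_smul]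
  simp [Real.pi_ne_zero, Complex.ext_iff]
/-- `extMap` is differentiable at every point of `{‖z 0‖ < R, ‖z ℓ‖ < R}`. -/
lemma extMap_differentiableAt (hn : 1 ≤ n) {f : EE n → EE n}
    (hf : DifferentiableOn ℂ f (Dn1 n)) {R : ℝ} (hR : 0 < R) {z₀ : EE n}
    (h0 : ‖z₀ 0‖ < R) (hl : ‖z₀ (ll n)‖ < R) :
    DifferentiableAt ℂ (extMap n f R) z₀ := by
  classical
  set δ : ℝ := min (R - ‖z₀ 0‖) (R - ‖z₀ (ll n)‖) / 8 with hδdef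
  have hδpos : 0 < δ := by
    have : 0 < min (R - ‖z₀ 0‖) (R - ‖z₀ (ll n)‖) := lt_min (by linarith) (by linarith)
    positivity
  have h8a : 8 * δ ≤ R - ‖z₀ 0‖ := by
    have := min_le_left (R - ‖z₀ 0‖) (R - ‖z₀ (ll n)‖); rw [hδdef]; linarith
  have h8b : 8 * δ ≤ R - ‖z₀ (ll n)‖ := by
    have := min_le_right (R - ‖z₀ 0‖) (R - ‖z₀ (ll n)‖); rw [hδdef]; linarith
  have hδR : 2 * δ ≤ R := by
    have := norm_nonneg (z₀ 0); linarith
  have hwn : ∀ θ : ℝ, ‖circleMap 0 R θ‖ = R := by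
    intro θ
    have := norm_circleMap_zero R θ
    rw [this, abs_of_pos hR]
  -- the compact set where all relevant points live
  set K : Set (EE n) := closedBall z₀ (2*R + ‖z₀‖) ∩
      ({x | R - 2*δ ≤ ‖x (ll n)‖} ∩ {x | ‖x 0‖ ≤ R - 3*δ}) with hKdef
  have hKc : IsCompact K := by
    apply (isCompact_closedBall z₀ _).inter_right
    exact (isClosed_le continuous_const ((continuous_apply (ll n)).norm)).inter
      (isClosed_le ((continuous_apply (0 : Fin (n+1))).norm) continuous_const)
  have hKD : K ⊆ Dn1 n := by
    rintro x ⟨-, hx2, hx3⟩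
    exact mem_Dn1_of_lt hn (by simp only [mem_setOf_eq] at hx2 hx3; linarith)
  -- geometry: small balls around circle slice points are inside K
  have hGeomK : ∀ z ∈ ball z₀ δ, ∀ θ : ℝ, ∀ x ∈
      closedBall (Function.update z (ll n) (circleMap 0 R θ)) δ, x ∈ K := by
    intro z hz θ x hx
    have hzz : ‖z - z₀‖ ≤ δ := by
      rw [mem_ball, dist_eq_norm] at hz; linarith
    have hxu : ‖x - Function.update z (ll n) (circleMap 0 R θ)‖ ≤ δ := by
      rwa [mem_closedBall, dist_eq_norm] at hx
    have hcoord0 : ‖x 0 - z 0‖ ≤ δ := by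
      have h := norm_le_pi_norm (x - Function.update z (ll n) (circleMap 0 R θ)) 0
      rw [Pi.sub_apply, Function.update_of_ne (Ne.symm (ll_ne_zero hn))] at h
      linarith
    have hz00 : ‖z 0 - z₀ 0‖ ≤ δ := by
      have h := norm_le_pi_norm (z - z₀) 0
      rw [Pi.sub_apply] at h; linarith
    have hx0 : ‖x 0‖ ≤ R - 3*δ := by
      have h1 : ‖x 0‖ ≤ ‖x 0 - z 0‖ + ‖z 0 - z₀ 0‖ + ‖z₀ 0‖ := by
        have := norm_add₃_le (a := x 0 - z 0) (b := z 0 - z₀ 0) (c := z₀ 0)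
        simpa using this
      linarith
    have hcoordl : ‖x (ll n) - circleMap 0 R θ‖ ≤ δ := by
      have h := norm_le_pi_norm (x - Function.update z (ll n) (circleMap 0 R θ)) (ll n)
      rw [Pi.sub_apply, Function.update_self] at h
      linarith
    have hxl : R - 2*δ ≤ ‖x (ll n)‖ := by
      have h := norm_sub_norm_le (circleMap 0 R θ) (x (ll n))
      rw [norm_sub_rev] at hcoordl
      rw [hwn θ] at h
      linarith
    have hdist : ‖x - z₀‖ ≤ 2*R + ‖z₀‖ := by
      have hub : ‖Function.update z (ll n) (circleMap 0 R θ) - z₀‖ ≤ R + ‖z₀‖ + δ := by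
        apply pi_norm_le_iff_of_nonneg (by positivity) |>.2
        intro i
        rw [Pi.sub_apply]
        by_cases hi : i = ll n
        · subst hi
          rw [Function.update_self]
          have h1 : ‖circleMap 0 R θ - z₀ (ll n)‖ ≤ ‖circleMap 0 R θ‖ + ‖z₀ (ll n)‖ :=
            norm_sub_le _ _
          have h2 : ‖z₀ (ll n)‖ ≤ ‖z₀‖ := norm_le_pi_norm z₀ (ll n)
          rw [hwn θ] at h1
          linarith
        · rw [Function.update_of_ne hi]
          have h := norm_le_pi_norm (z - z₀) i
          rw [Pi.sub_apply] at h
          have hz0n := norm_nonneg z₀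
          linarith
      calc ‖x - z₀‖ ≤ ‖x - Function.update z (ll n) (circleMap 0 R θ)‖
            + ‖Function.update z (ll n) (circleMap 0 R θ) - z₀‖ := by
              have := norm_sub_le_norm_sub_add_norm_sub x
                (Function.update z (ll n) (circleMap 0 R θ)) z₀
              exact this
        _ ≤ δ + (R + ‖z₀‖ + δ) := by linarith
        _ ≤ 2*R + ‖z₀‖ := by linarith
    refine ⟨?_, ?_, ?_⟩
    · rwa [mem_closedBall, dist_eq_norm]
    · exact hxl
    · exact hx0
  have hupdD : ∀ z ∈ ball z₀ δ, ∀ θ : ℝ,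
      Function.update z (ll n) (circleMap 0 R θ) ∈ Dn1 n := by
    intro z hz θ
    exact hKD (hGeomK z hz θ _ (mem_closedBall_self hδpos.le))
  -- bound on f over K
  obtain ⟨M₀, hM₀⟩ := hKc.exists_bound_of_continuousOn (hf.continuousOn.mono hKD)
  set M : ℝ := max M₀ 0 with hMdef
  have hM : ∀ x ∈ K, ‖f x‖ ≤ M := fun x hx => le_trans (hM₀ x hx) (le_max_left _ _)
  have hM0 : 0 ≤ M := le_max_right _ _
  set Kf : ℝ := (2*M+1)/(δ/2) with hKfdef
  have hKf0 : 0 ≤ Kf := by positivity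
  -- local Lipschitz estimate for the f-part
  have hLipf : ∀ θ : ℝ, ∀ z ∈ ball z₀ (δ/2), ∀ z' ∈ ball z₀ (δ/2),
      ‖f (Function.update z (ll n) (circleMap 0 R θ))
        - f (Function.update z' (ll n) (circleMap 0 R θ))‖ ≤ Kf * ‖z - z'‖ := by
    intro θ z hz z' hz'
    set p := Function.update z₀ (ll n) (circleMap 0 R θ) with hpdef
    have hzmem : ∀ y ∈ ball z₀ (δ/2),
        Function.update y (ll n) (circleMap 0 R θ) ∈ ball p (δ/2) := by
      intro y hy
      rw [mem_ball, dist_eq_norm]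
      calc ‖Function.update y (ll n) (circleMap 0 R θ) - p‖ ≤ ‖y - z₀‖ :=
            norm_update_sub_update y z₀ _
        _ < δ/2 := by rw [mem_ball, dist_eq_norm] at hy; exact hy
    have hsubK : ∀ q ∈ ball p (δ/2), ball q (δ/2) ⊆ K := by
      intro q hq y hy
      apply hGeomK z₀ (mem_ball_self hδpos) θ
      rw [mem_closedBall, dist_eq_norm]
      rw [mem_ball, dist_eq_norm] at hq hy
      calc ‖y - p‖ ≤ ‖y - q‖ + ‖q - p‖ := norm_sub_le_norm_sub_add_norm_sub _ _ _
        _ ≤ δ := by linarith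
    have hdiffat : ∀ q ∈ ball p (δ/2), DifferentiableAt ℂ f q := by
      intro q hq
      exact hf.differentiableAt (isOpen_Dn1.mem_nhds
        (hKD (hsubK q hq (mem_ball_self (by positivity)))))
    have hfd : ∀ q ∈ ball p (δ/2), ‖fderiv ℂ f q‖ ≤ Kf := by
      intro q hq
      apply norm_fderiv_le_of_ball (by positivity : (0:ℝ) < δ/2)
      · intro y hy
        exact hf.differentiableAt (isOpen_Dn1.mem_nhds (hKD (hsubK q hq hy)))
      · intro y hy
        exact hM y (hsubK q hq hy)
    have key := Convex.norm_image_sub_le_of_norm_fderiv_le hdiffat hfd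
      (convex_ball p (δ/2)) (hzmem z' hz') (hzmem z hz)
    calc ‖f (Function.update z (ll n) (circleMap 0 R θ))
          - f (Function.update z' (ll n) (circleMap 0 R θ))‖
        ≤ Kf * ‖Function.update z (ll n) (circleMap 0 R θ)
          - Function.update z' (ll n) (circleMap 0 R θ)‖ := key
      _ ≤ Kf * ‖z - z'‖ := mul_le_mul_of_nonneg_left (norm_update_sub_update _ _ _) hKf0
  -- denominator bound
  have hden : ∀ θ : ℝ, ∀ z ∈ ball z₀ (δ/2), δ ≤ ‖circleMap 0 R θ - z (ll n)‖ := by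
    intro θ z hz
    rw [mem_ball, dist_eq_norm] at hz
    have h1 : ‖z (ll n) - z₀ (ll n)‖ ≤ δ/2 := by
      have := norm_le_pi_norm (z - z₀) (ll n)
      rw [Pi.sub_apply] at this; linarith
    have h2 : ‖z (ll n)‖ ≤ ‖z₀ (ll n)‖ + δ/2 := by
      have := norm_sub_norm_le (z (ll n)) (z₀ (ll n)); linarith
    have h3 := norm_sub_norm_le (circleMap 0 R θ) (z (ll n))
    rw [hwn θ] at h3
    linarith
  have hbound : ∀ θ : ℝ, ∀ z ∈ ball z₀ (δ/2),
      ‖f (Function.update z (ll n) (circleMap 0 R θ))‖ ≤ M := by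
    intro θ z hz
    apply hM
    apply hGeomK z (ball_subset_ball (by linarith) hz) θ
    exact mem_closedBall_self hδpos.le
  -- the integrand and its derivative at z₀
  set F : EE n → ℝ → EE n := fun z θ => deriv (circleMap 0 R) θ •
    ((circleMap 0 R θ - z (ll n))⁻¹ • f (Function.update z (ll n) (circleMap 0 R θ))) with hFdef
  set P : EE n →L[ℂ] EE n := ContinuousLinearMap.id ℂ (EE n) +
    (-(ContinuousLinearMap.proj (ll n) : EE n →L[ℂ] ℂ)).smulRight (Pi.single (ll n) 1) with hPdef
  set F' : ℝ → (EE n →L[ℂ] EE n) := fun θ => deriv (circleMap 0 R) θ •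
    ((circleMap 0 R θ - z₀ (ll n))⁻¹ •
        ((fderiv ℂ f (Function.update z₀ (ll n) (circleMap 0 R θ))).comp P) +
      ((ContinuousLinearMap.smulRight (1 : ℂ →L[ℂ] ℂ)
          (-((circleMap 0 R θ - z₀ (ll n)) ^ 2)⁻¹)).comp
        (-(ContinuousLinearMap.proj (ll n) : EE n →L[ℂ] ℂ))).smulRight
        (f (Function.update z₀ (ll n) (circleMap 0 R θ)))) with hF'def
  have hz₀δ2 : z₀ ∈ ball z₀ (δ/2) := mem_ball_self (by positivity)
  have hγcont : Continuous fun θ : ℝ => Function.update z₀ (ll n) (circleMap 0 R θ) := by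
    have : (fun θ : ℝ => Function.update z₀ (ll n) (circleMap 0 R θ)) =
        fun θ : ℝ => z₀ + (circleMap 0 R θ - z₀ (ll n)) • (Pi.single (ll n) 1 : EE n) := by
      funext θ; exact update_eq_add z₀ _
    rw [this]
    exact continuous_const.add
      (((continuous_circleMap 0 R).sub continuous_const).smul continuous_const)
  have hfγ : Continuous fun θ : ℝ => f (Function.update z₀ (ll n) (circleMap 0 R θ)) :=
    hf.continuousOn.comp_continuous hγcont
      (fun θ => hupdD z₀ (mem_ball_self hδpos) θ)
  have hne : ∀ θ : ℝ, circleMap 0 R θ - z₀ (ll n) ≠ 0 := by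
    intro θ h
    have := hden θ z₀ hz₀δ2
    rw [h, norm_zero] at this
    linarith
  have hdercont : Continuous fun θ : ℝ => deriv (circleMap 0 R) θ := by
    have : (fun θ : ℝ => deriv (circleMap 0 R) θ) = fun θ => circleMap 0 R θ * Complex.I :=
      funext fun θ => deriv_circleMap _ _ _
    rw [this]
    exact (continuous_circleMap 0 R).mul continuous_const
  have hndθ : ∀ θ : ℝ, ‖deriv (circleMap 0 R) θ‖ = R := by
    intro θ
    rw [deriv_circleMap, norm_mul, Complex.norm_I, hwn θ, mul_one]
  -- continuity in θ of the integrand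
  have hFcont : ∀ z ∈ ball z₀ (δ/2), Continuous fun θ => F z θ := by
    intro z hz
    apply hdercont.smul
    apply Continuous.fun_smul
    · apply Continuous.inv₀
      · exact (continuous_circleMap 0 R).sub continuous_const
      · intro θ h
        have := hden θ z hz
        rw [h, norm_zero] at this
        linarith
    · have hcont2 : Continuous fun θ : ℝ => Function.update z (ll n) (circleMap 0 R θ) := by
        have : (fun θ : ℝ => Function.update z (ll n) (circleMap 0 R θ)) =
            fun θ : ℝ => z + (circleMap 0 R θ - z (ll n)) • (Pi.single (ll n) 1 : EE n) := by
          funext θ; exact update_eq_add z _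
        rw [this]
        exact continuous_const.add
          (((continuous_circleMap 0 R).sub continuous_const).smul continuous_const)
      exact hf.continuousOn.comp_continuous hcont2
        (fun θ => hupdD z (ball_subset_ball (by linarith) hz) θ)
  set C : ℝ := R * (M * (δ⁻¹ * δ⁻¹) + δ⁻¹ * Kf) with hCdef
  have hC0 : 0 ≤ C := by positivity
  set μr := MeasureTheory.volume.restrict (Set.uIoc (0:ℝ) (2*Real.pi)) with hμr
  -- measurability of F'
  have hF'meas : MeasureTheory.AEStronglyMeasurable F' μr := by
    apply MeasureTheory.AEStronglyMeasurable.smul hdercont.aestronglyMeasurable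
    apply MeasureTheory.AEStronglyMeasurable.add
    · apply MeasureTheory.AEStronglyMeasurable.fun_smul
      · exact (((continuous_circleMap 0 R).sub continuous_const).inv₀ hne).aestronglyMeasurable
      · exact ((ContinuousLinearMap.compL ℂ (EE n) (EE n) (EE n)).flip P).continuous.comp_aestronglyMeasurable
          (((measurable_fderiv ℂ f).comp hγcont.measurable).aestronglyMeasurable)
    · apply Continuous.aestronglyMeasurable
      have hs2 : Continuous fun θ : ℝ => -((circleMap 0 R θ - z₀ (ll n)) ^ 2)⁻¹ :=
        ((((continuous_circleMap 0 R).sub continuous_const).pow 2).inv₀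
          (fun θ => pow_ne_zero 2 (hne θ))).neg
      have hsm : Continuous fun θ : ℝ => ContinuousLinearMap.smulRight (1 : ℂ →L[ℂ] ℂ)
          (-((circleMap 0 R θ - z₀ (ll n)) ^ 2)⁻¹) :=
        ((ContinuousLinearMap.smulRightL ℂ ℂ ℂ) (1 : ℂ →L[ℂ] ℂ)).continuous.comp hs2
      have hcmp : Continuous fun θ : ℝ => (ContinuousLinearMap.smulRight (1 : ℂ →L[ℂ] ℂ)
          (-((circleMap 0 R θ - z₀ (ll n)) ^ 2)⁻¹)).comp
          (-(ContinuousLinearMap.proj (ll n) : EE n →L[ℂ] ℂ)) :=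
        (((ContinuousLinearMap.compL ℂ (EE n) ℂ ℂ).flip
          (-(ContinuousLinearMap.proj (ll n) : EE n →L[ℂ] ℂ))).continuous).comp hsm
      exact Continuous.clm_apply
        ((ContinuousLinearMap.smulRightL ℂ (EE n) (EE n)).continuous.comp hcmp) hfγ
  -- the Lipschitz estimate
  have hlip : ∀ θ : ℝ, LipschitzOnWith (Real.nnabs C) (fun z => F z θ) (ball z₀ (δ/2)) := by
    intro θ
    rw [lipschitzOnWith_iff_norm_sub_le]
    intro z hz z' hz'
    rw [Real.coe_nnabs, _root_.abs_of_nonneg hC0]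
    set a : ℂ := circleMap 0 R θ - z (ll n) with hadef
    set b : ℂ := circleMap 0 R θ - z' (ll n) with hbdef
    have hna : δ ≤ ‖a‖ := hden θ z hz
    have hnb : δ ≤ ‖b‖ := hden θ z' hz'
    have ha : a ≠ 0 := by intro h; rw [h, norm_zero] at hna; linarith
    have hb : b ≠ 0 := by intro h; rw [h, norm_zero] at hnb; linarith
    set vz := f (Function.update z (ll n) (circleMap 0 R θ)) with hvz
    set vz' := f (Function.update z' (ll n) (circleMap 0 R θ)) with hvz'
    have hsplit : a⁻¹ • vz - b⁻¹ • vz' = (a⁻¹ - b⁻¹) • vz + b⁻¹ • (vz - vz') := by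
      rw [sub_smul, smul_sub]; abel
    have hinvd : a⁻¹ - b⁻¹ = (b - a) / (a * b) := inv_sub_inv ha hb
    have hba : b - a = z (ll n) - z' (ll n) := by rw [hadef, hbdef]; ring
    have hcoord : ‖z (ll n) - z' (ll n)‖ ≤ ‖z - z'‖ := by
      have := norm_le_pi_norm (z - z') (ll n)
      rw [Pi.sub_apply] at this; exact this
    have hinva : ‖a‖⁻¹ ≤ δ⁻¹ := by
      apply inv_anti₀ hδpos hna
    have hinvb : ‖b‖⁻¹ ≤ δ⁻¹ := by
      apply inv_anti₀ hδpos hnb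
    have h1 : ‖(a⁻¹ - b⁻¹) • vz‖ ≤ (M * (δ⁻¹ * δ⁻¹)) * ‖z - z'‖ := by
      rw [norm_smul, hinvd, hba, norm_div, norm_mul]
      have hvzM : ‖vz‖ ≤ M := hbound θ z hz
      calc ‖z (ll n) - z' (ll n)‖ / (‖a‖ * ‖b‖) * ‖vz‖
          = ‖z (ll n) - z' (ll n)‖ * (‖a‖⁻¹ * ‖b‖⁻¹) * ‖vz‖ := by
            rw [div_eq_mul_inv, mul_inv]
        _ ≤ ‖z - z'‖ * (δ⁻¹ * δ⁻¹) * M := by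
            apply mul_le_mul _ hvzM (norm_nonneg _) (by positivity)
            apply mul_le_mul hcoord _ (by positivity) (norm_nonneg _)
            exact mul_le_mul hinva hinvb (by positivity) (by positivity)
        _ = (M * (δ⁻¹ * δ⁻¹)) * ‖z - z'‖ := by ring
    have h2 : ‖b⁻¹ • (vz - vz')‖ ≤ (δ⁻¹ * Kf) * ‖z - z'‖ := by
      rw [norm_smul, norm_inv]
      calc ‖b‖⁻¹ * ‖vz - vz'‖ ≤ δ⁻¹ * (Kf * ‖z - z'‖) := by
            apply mul_le_mul hinvb (hLipf θ z hz z' hz') (norm_nonneg _) (by positivity)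
        _ = (δ⁻¹ * Kf) * ‖z - z'‖ := by ring
    have hFdiff : F z θ - F z' θ = deriv (circleMap 0 R) θ • (a⁻¹ • vz - b⁻¹ • vz') := by
      rw [hFdef]; simp only []
      rw [← smul_sub]
    rw [hFdiff, norm_smul, hndθ θ, hsplit]
    calc R * ‖(a⁻¹ - b⁻¹) • vz + b⁻¹ • (vz - vz')‖
        ≤ R * (‖(a⁻¹ - b⁻¹) • vz‖ + ‖b⁻¹ • (vz - vz')‖) := by
          apply mul_le_mul_of_nonneg_left (norm_add_le _ _) hR.le
      _ ≤ R * ((M * (δ⁻¹ * δ⁻¹)) * ‖z - z'‖ + (δ⁻¹ * Kf) * ‖z - z'‖) := by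
          apply mul_le_mul_of_nonneg_left (by linarith) hR.le
      _ = C * ‖z - z'‖ := by rw [hCdef]; ring
  -- derivative of the integrand at z₀
  have hdiff : ∀ θ : ℝ, HasFDerivAt (fun z => F z θ) (F' θ) z₀ := by
    intro θ
    have hproj : HasFDerivAt (fun z : EE n => z (ll n))
        (ContinuousLinearMap.proj (ll n) : EE n →L[ℂ] ℂ) z₀ :=
      (ContinuousLinearMap.proj (ll n) : EE n →L[ℂ] ℂ).hasFDerivAt
    have hsub : HasFDerivAt (fun z : EE n => circleMap 0 R θ - z (ll n))
        (-(ContinuousLinearMap.proj (ll n) : EE n →L[ℂ] ℂ)) z₀ :=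
      hproj.const_sub _
    have hA : HasFDerivAt (fun z : EE n => (circleMap 0 R θ - z (ll n))⁻¹)
        ((ContinuousLinearMap.smulRight (1 : ℂ →L[ℂ] ℂ)
          (-((circleMap 0 R θ - z₀ (ll n)) ^ 2)⁻¹)).comp
          (-(ContinuousLinearMap.proj (ll n) : EE n →L[ℂ] ℂ))) z₀ :=
      (hasFDerivAt_inv (hne θ)).comp z₀ hsub
    have hUd : HasFDerivAt (fun z : EE n => Function.update z (ll n) (circleMap 0 R θ)) P z₀ := by
      have heq : (fun z : EE n => Function.update z (ll n) (circleMap 0 R θ)) =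
          fun z : EE n => z + (circleMap 0 R θ - z (ll n)) • (Pi.single (ll n) 1 : EE n) := by
        funext z; exact update_eq_add z _
      rw [heq, hPdef]
      exact (hasFDerivAt_id z₀).add (hsub.smul_const _)
    have hB : HasFDerivAt (fun z : EE n => f (Function.update z (ll n) (circleMap 0 R θ)))
        ((fderiv ℂ f (Function.update z₀ (ll n) (circleMap 0 R θ))).comp P) z₀ :=
      ((hf.differentiableAt (isOpen_Dn1.mem_nhds
        (hupdD z₀ (mem_ball_self hδpos) θ))).hasFDerivAt).comp z₀ hUd
    exact (hA.fun_smul hB).fun_const_smul _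
  -- apply the parametric differentiation theorem
  have hmain := intervalIntegral.hasFDerivAt_integral_of_dominated_loc_of_lip
    (F := F) (F' := F') (x₀ := z₀) (a := 0) (b := 2*Real.pi) (μ := MeasureTheory.volume)
    (bound := fun _ => C) (ball_mem_nhds z₀ (by positivity : (0:ℝ) < δ/2))
    (by
      filter_upwards [ball_mem_nhds z₀ (by positivity : (0:ℝ) < δ/2)] with z hz
      exact (hFcont z hz).aestronglyMeasurable)
    ((hFcont z₀ hz₀δ2).intervalIntegrable _ _)
    hF'meas
    (MeasureTheory.ae_of_all _ (fun θ _ => hlip θ))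
    (intervalIntegrable_const)
    (MeasureTheory.ae_of_all _ (fun θ _ => hdiff θ))
  have hfin : HasFDerivAt (fun z => (2 * (Real.pi:ℂ) * Complex.I)⁻¹ •
      ∫ θ in (0:ℝ)..2*Real.pi, F z θ)
      ((2 * (Real.pi:ℂ) * Complex.I)⁻¹ • ∫ θ in (0:ℝ)..2*Real.pi, F' θ) z₀ :=
    hmain.2.fun_const_smul _
  exact hfin.differentiableAt

lemma convex_coord (i : Fin (n+1)) (R : ℝ) : Convex ℝ {z : EE n | ‖z i‖ < R} := by
  have heq : {z : EE n | ‖z i‖ < R} =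
      ((ContinuousLinearMap.proj i : EE n →L[ℂ] ℂ).restrictScalars ℝ).toLinearMap ⁻¹'
        (ball (0:ℂ) R) := by
    ext z; simp [mem_ball, dist_eq_norm]
  rw [heq]
  exact (convex_ball (0:ℂ) R).linear_preimage _

/-- base point: the point (0, 1, 0, …, 0) -/
def zstar (n : ℕ) : EE n := Pi.single 1 1

lemma fin_one_val (hn : 1 < n) : ((1 : Fin (n+1)) : ℕ) = 1 := by
  have : ((1 : Fin (n+1)) : ℕ) = 1 % (n+1) := rfl
  rw [this, Nat.mod_eq_of_lt (by omega)]

lemma zstar_zero (hn : 1 < n) : zstar n 0 = 0 := by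
  apply Pi.single_eq_of_ne
  intro h
  have h' := congrArg Fin.val h
  rw [Fin.val_zero, fin_one_val hn] at h'
  omega

lemma zstar_ll (hn : 1 < n) : zstar n (ll n) = 0 := by
  apply Pi.single_eq_of_ne
  intro h
  have h' := congrArg Fin.val h
  rw [Fin.val_last, fin_one_val hn] at h'
  omega

lemma zstar_one : zstar n 1 = 1 := Pi.single_eq_same _ _

lemma zstar_W (hn : 1 < n) :
    ‖zstar n 0‖ ^ 2 < ∑ i ∈ Finset.univ.erase (jj n (le_of_lt hn)), ‖zstar n i.succ‖ ^ 2 := by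
  have hn1 : 1 ≤ n := le_of_lt hn
  set i0 : Fin n := ⟨0, by omega⟩ with hi0
  have hi0succ : i0.succ = (1 : Fin (n+1)) := by
    apply Fin.ext
    rw [fin_one_val hn]
    simp [hi0]
  have hmem : i0 ∈ Finset.univ.erase (jj n hn1) := by
    apply Finset.mem_erase.2
    refine ⟨?_, Finset.mem_univ _⟩
    simp only [hi0, jj, ne_eq, Fin.mk.injEq]
    omega
  have hterm := Finset.single_le_sum
    (f := fun i : Fin n => ‖zstar n i.succ‖ ^ 2)
    (fun i _ => by positivity) hmem
  simp only [hi0succ, zstar_one] at hterm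
  rw [zstar_zero hn]
  simp only [norm_zero, norm_one, one_pow] at hterm ⊢
  calc (0:ℝ) ^ 2 = 0 := by norm_num
    _ < 1 := one_pos
    _ ≤ _ := hterm

lemma zstar_mem_Dn1 (hn : 1 < n) : zstar n ∈ Dn1 n := by
  have hn1 : 1 ≤ n := le_of_lt hn
  have hle : ∑ i ∈ Finset.univ.erase (jj n hn1), ‖zstar n i.succ‖ ^ 2
      ≤ ∑ i : Fin n, ‖zstar n i.succ‖ ^ 2 :=
    Finset.sum_le_sum_of_subset_of_nonneg (Finset.erase_subset _ _)
      (fun i _ _ => by positivity)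
  simp only [Dn1, mem_setOf_eq]
  exact lt_of_lt_of_le (zstar_W hn) hle

/-- Every holomorphic function on `Dn1 n` (n ≥ 2) extends to an entire function. -/
lemma exists_entire (hn : 1 < n) {f : EE n → EE n} (hf : DifferentiableOn ℂ f (Dn1 n)) :
    ∃ F : EE n → EE n, Differentiable ℂ F ∧ Set.EqOn F f (Dn1 n) := by
  classical
  have hn1 : 1 ≤ n := le_of_lt hn
  set W : ℝ → Set (EE n) := fun R => {z | ‖z 0‖ < R ∧ ‖z (ll n)‖ < R ∧
    ‖z 0‖ ^ 2 < ∑ i ∈ Finset.univ.erase (jj n hn1), ‖z i.succ‖ ^ 2} with hWdef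
  have hWopen : ∀ R : ℝ, IsOpen (W R) := by
    intro R
    apply IsOpen.inter (isOpen_lt ((continuous_apply (0 : Fin (n+1))).norm) continuous_const)
    apply IsOpen.inter (isOpen_lt ((continuous_apply (ll n)).norm) continuous_const)
    exact isOpen_lt ((continuous_apply (0 : Fin (n+1))).norm.pow 2)
      (continuous_finset_sum _ fun i _ => ((continuous_apply i.succ).norm.pow 2))
  have hWext : ∀ R : ℝ, 0 < R → Set.EqOn (extMap n f R) f (W R) := by
    intro R hR z hz
    exact extMap_eq hn1 hf hR hz.2.1 hz.2.2
  have hzstarW : ∀ R : ℝ, 0 < R → zstar n ∈ W R := by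
    intro R hR
    refine ⟨?_, ?_, zstar_W hn⟩
    · rw [zstar_zero hn]; simpa using hR
    · rw [zstar_ll hn]; simpa using hR
  have hCons : ∀ R R' : ℝ, 0 < R → R ≤ R' →
      Set.EqOn (extMap n f R) (extMap n f R')
        {z : EE n | ‖z 0‖ < R ∧ ‖z (ll n)‖ < R} := by
    intro R R' hR hRR'
    have hR' : 0 < R' := lt_of_lt_of_le hR hRR'
    set U : Set (EE n) := {z | ‖z 0‖ < R ∧ ‖z (ll n)‖ < R} with hUdef
    have hUopen : IsOpen U :=
      (isOpen_lt ((continuous_apply (0 : Fin (n+1))).norm) continuous_const).inter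
        (isOpen_lt ((continuous_apply (ll n)).norm) continuous_const)
    have hUconv : Convex ℝ U := (convex_coord 0 R).inter (convex_coord (ll n) R)
    obtain ⟨ρ, hρpos, hρsub⟩ := Metric.isOpen_iff.1 (hWopen R) (zstar n) (hzstarW R hR)
    have hWU : W R ⊆ U := fun z hz => ⟨hz.1, hz.2.1⟩
    apply eqOn_of_convex hUopen hUconv
    · intro z hz
      exact (extMap_differentiableAt hn1 hf hR hz.1 hz.2).differentiableWithinAt
    · intro z hz
      exact (extMap_differentiableAt hn1 hf hR' (lt_of_lt_of_le hz.1 hRR')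
        (lt_of_lt_of_le hz.2 hRR')).differentiableWithinAt
    · exact hρpos
    · exact hρsub.trans hWU
    · intro y hy
      have hyW : y ∈ W R := hρsub hy
      have hyW' : y ∈ W R' := ⟨lt_of_lt_of_le hyW.1 hRR', lt_of_lt_of_le hyW.2.1 hRR', hyW.2.2⟩
      rw [hWext R hR hyW, hWext R' hR' hyW']
  -- the global extension
  set F : EE n → EE n := fun z => extMap n f (max ‖z 0‖ ‖z (ll n)‖ + 1) z with hFdef
  have hRpos : ∀ z : EE n, (0:ℝ) < max ‖z 0‖ ‖z (ll n)‖ + 1 := by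
    intro z
    have := le_max_left ‖z 0‖ ‖z (ll n)‖
    have := norm_nonneg (z 0)
    linarith
  have hlocal : ∀ z₀ : EE n,
      Set.EqOn F (extMap n f (max ‖z₀ 0‖ ‖z₀ (ll n)‖ + 2)) (ball z₀ (1/2)) := by
    intro z₀ z hz
    rw [mem_ball, dist_eq_norm] at hz
    have hc0 : ‖z 0 - z₀ 0‖ ≤ ‖z - z₀‖ := by
      have := norm_le_pi_norm (z - z₀) 0; rwa [Pi.sub_apply] at this
    have hcl : ‖z (ll n) - z₀ (ll n)‖ ≤ ‖z - z₀‖ := by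
      have := norm_le_pi_norm (z - z₀) (ll n); rwa [Pi.sub_apply] at this
    have h0 : ‖z 0‖ ≤ ‖z₀ 0‖ + 1/2 := by
      have := norm_sub_norm_le (z 0) (z₀ 0); linarith
    have hl : ‖z (ll n)‖ ≤ ‖z₀ (ll n)‖ + 1/2 := by
      have := norm_sub_norm_le (z (ll n)) (z₀ (ll n)); linarith
    have hle : max ‖z 0‖ ‖z (ll n)‖ + 1 ≤ max ‖z₀ 0‖ ‖z₀ (ll n)‖ + 2 := by
      have h1 := le_max_left ‖z₀ 0‖ ‖z₀ (ll n)‖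
      have h2 := le_max_right ‖z₀ 0‖ ‖z₀ (ll n)‖
      have h3 : max ‖z 0‖ ‖z (ll n)‖ ≤ max ‖z₀ 0‖ ‖z₀ (ll n)‖ + 1 :=
        max_le (by linarith) (by linarith)
      linarith
    have hmem : z ∈ {y : EE n | ‖y 0‖ < max ‖z 0‖ ‖z (ll n)‖ + 1 ∧
        ‖y (ll n)‖ < max ‖z 0‖ ‖z (ll n)‖ + 1} := by
      constructor
      · have := le_max_left ‖z 0‖ ‖z (ll n)‖; linarith
      · have := le_max_right ‖z 0‖ ‖z (ll n)‖; linarith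
    exact hCons _ _ (hRpos z) hle hmem
  have hFdiff : Differentiable ℂ F := by
    intro z₀
    have hR' : (0:ℝ) < max ‖z₀ 0‖ ‖z₀ (ll n)‖ + 2 := by
      have := le_max_left ‖z₀ 0‖ ‖z₀ (ll n)‖
      have := norm_nonneg (z₀ 0)
      linarith
    have h1 : DifferentiableAt ℂ (extMap n f (max ‖z₀ 0‖ ‖z₀ (ll n)‖ + 2)) z₀ := by
      apply extMap_differentiableAt hn1 hf hR'
      · have := le_max_left ‖z₀ 0‖ ‖z₀ (ll n)‖; linarith
      · have := le_max_right ‖z₀ 0‖ ‖z₀ (ll n)‖; linarith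
    apply h1.congr_of_eventuallyEq
    filter_upwards [Metric.ball_mem_nhds z₀ (by norm_num : (0:ℝ) < 1/2)] with y hy
    exact hlocal z₀ hy
  refine ⟨F, hFdiff, ?_⟩
  -- identity theorem argument on the connected set Dn1
  set u : Set (EE n) := {x | ∃ r > 0, Set.EqOn F f (ball x r)} with hudef
  have huopen : IsOpen u := by
    apply Metric.isOpen_iff.2
    rintro x ⟨r, hr, heq⟩
    refine ⟨r/2, by linarith, ?_⟩
    intro y hy
    rw [mem_ball] at hy
    refine ⟨r/2, by linarith, ?_⟩
    intro w hw
    apply heq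
    rw [mem_ball] at hw ⊢
    calc dist w x ≤ dist w y + dist y x := dist_triangle _ _ _
      _ < r := by linarith
  have hzstar_u : zstar n ∈ u := by
    set R' : ℝ := max ‖zstar n 0‖ ‖zstar n (ll n)‖ + 2 with hR'def
    have hR' : 0 < R' := by
      have := le_max_left ‖zstar n 0‖ ‖zstar n (ll n)‖
      have := norm_nonneg (zstar n 0)
      rw [hR'def]; linarith
    obtain ⟨ρ₀, hρ₀, hρ₀sub⟩ := Metric.isOpen_iff.1 (hWopen R') (zstar n) (hzstarW R' hR')
    refine ⟨min ρ₀ (1/2), by positivity, ?_⟩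
    intro y hy
    rw [mem_ball] at hy
    have hy1 : y ∈ ball (zstar n) ρ₀ := by
      rw [mem_ball]; exact lt_of_lt_of_le hy (min_le_left _ _)
    have hy2 : y ∈ ball (zstar n) (1/2) := by
      rw [mem_ball]; exact lt_of_lt_of_le hy (min_le_right _ _)
    rw [hlocal (zstar n) hy2]
    exact hWext R' hR' (hρ₀sub hy1)
  have hclos : ∀ x ∈ Dn1 n, x ∈ closure u → x ∈ u := by
    intro x hx hxc
    obtain ⟨ε, hε, hball⟩ := Metric.isOpen_iff.1 isOpen_Dn1 x hx
    obtain ⟨y, hyu, hyb⟩ := Metric.mem_closure_iff.1 hxc (ε/2) (by linarith)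
    obtain ⟨r, hr, heq⟩ := hyu
    set r₂ : ℝ := min r (ε - dist x y) with hr₂def
    have hdxy : dist x y < ε/2 := hyb
    have hr₂ : 0 < r₂ := lt_min hr (by linarith)
    have hsub1 : ball y r₂ ⊆ ball x ε := by
      intro w hw
      rw [mem_ball] at hw ⊢
      have h1 : r₂ ≤ ε - dist x y := min_le_right _ _
      calc dist w x ≤ dist w y + dist y x := dist_triangle _ _ _
        _ < r₂ + dist y x := by linarith
        _ ≤ ε := by rw [dist_comm y x]; linarith
    have heq2 : Set.EqOn F f (ball y r₂) :=
      heq.mono (ball_subset_ball (min_le_left _ _))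
    have := eqOn_of_convex isOpen_ball (convex_ball x ε)
      (hFdiff.differentiableOn) (hf.mono hball) hr₂ hsub1 heq2
    exact ⟨ε, hε, this⟩
  -- clopen argument
  intro x hx
  set v : Set (EE n) := (closure u)ᶜ with hvdef
  have hvopen : IsOpen v := isClosed_closure.isOpen_compl
  have hDsub : Dn1 n ⊆ u ∪ v := by
    intro y hy
    by_cases hc : y ∈ closure u
    · exact Or.inl (hclos y hy hc)
    · exact Or.inr hc
  have hucap : Dn1 n ∩ (u ∩ v) = ∅ := by
    ext y
    simp only [mem_inter_iff, mem_empty_iff_false, iff_false, not_and]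
    intro _ hyu
    exact fun hyv => hyv (subset_closure hyu)
  have hnev : ¬ (Dn1 n ∩ v).Nonempty := by
    intro hne
    have := isPreconnected_Dn1 hn1 u v huopen hvopen hDsub
      ⟨zstar n, zstar_mem_Dn1 hn, hzstar_u⟩ hne
    rw [hucap] at this
    exact Set.not_nonempty_empty this
  have hxu : x ∈ u := by
    rcases hDsub hx with h | h
    · exact h
    · exact absurd ⟨x, hx, h⟩ hnev
  obtain ⟨r, hr, heq⟩ := hxu
  exact heq (mem_ball_self hr)

end Dn1Aux

/-- For n > 1, every biholomorphic automorphism of D^{n,1} extends to a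
biholomorphic automorphism of ℂ^{n+1}. -/
theorem stmt_12 (n : ℕ) (hn : 1 < n)
    (f g : (Fin (n + 1) → ℂ) → (Fin (n + 1) → ℂ))
    (hf : DifferentiableOn ℂ f (Dn1 n)) (hg : DifferentiableOn ℂ g (Dn1 n))
    (hfm : Set.MapsTo f (Dn1 n) (Dn1 n)) (hgm : Set.MapsTo g (Dn1 n) (Dn1 n))
    (hinv : Set.InvOn g f (Dn1 n) (Dn1 n)) :
    ∃ F G : (Fin (n + 1) → ℂ) → (Fin (n + 1) → ℂ),
      Differentiable ℂ F ∧ Differentiable ℂ G ∧ Set.EqOn F f (Dn1 n) ∧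
        G ∘ F = id ∧ F ∘ G = id := by
  obtain ⟨F, hFd, hFe⟩ := Dn1Aux.exists_entire hn hf
  obtain ⟨G, hGd, hGe⟩ := Dn1Aux.exists_entire hn hg
  have hzD : Dn1Aux.zstar n ∈ Dn1 n := Dn1Aux.zstar_mem_Dn1 hn
  obtain ⟨ρ, hρ, hρsub⟩ := Metric.isOpen_iff.1 Dn1Aux.isOpen_Dn1 _ hzD
  have hGF : Set.EqOn (G ∘ F) id (Metric.ball (Dn1Aux.zstar n) ρ) := by
    intro x hx
    have hxD : x ∈ Dn1 n := hρsub hx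
    have h2 : f x ∈ Dn1 n := hfm hxD
    simp only [Function.comp_apply, id_eq, hFe hxD, hGe h2, hinv.1 hxD]
  have hFG : Set.EqOn (F ∘ G) id (Metric.ball (Dn1Aux.zstar n) ρ) := by
    intro x hx
    have hxD : x ∈ Dn1 n := hρsub hx
    have h2 : g x ∈ Dn1 n := hgm hxD
    simp only [Function.comp_apply, id_eq, hGe hxD, hFe h2, hinv.2 hxD]
  have hGFid : G ∘ F = id := by
    funext x
    exact eqOn_of_convex isOpen_univ convex_univ ((hGd.comp hFd).differentiableOn)
      differentiable_id.differentiableOn hρ (Set.subset_univ _) hGF (Set.mem_univ x)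
  have hFGid : F ∘ G = id := by
    funext x
    exact eqOn_of_convex isOpen_univ convex_univ ((hFd.comp hGd).differentiableOn)
      differentiable_id.differentiableOn hρ (Set.subset_univ _) hFG (Set.mem_univ x)
  exact ⟨F, G, hFd, hGd, hFe, hGFid, hFGid⟩
end

section
/- Let p, q ≥ 2 with p + q = n. Every biholomorphic automorphism of D^{p,q} = {(z,w) ∈ ℂᵖ × ℂ^q : |z|² - |w|² > 0} extends to a biholomorphic automorphism of ℂⁿ, and similarly every automorphism of C^{p,q} = {(z,w) : |z|² - |w|² < 0} extends to an automorphism of ℂⁿ; the restriction maps give mutually inverse group isomorphisms Aut(D^{p,q}) ≅ Aut(C^{p,q}). -/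
open Set Metric MeasureTheory Filter Complex Topology

/-- The domain D^{p,q} = {(z,w) : |z|² - |w|² > 0} ⊂ ℂᵖ × ℂ^q. -/
def Dpq (p q : ℕ) : Set ((Fin p → ℂ) × (Fin q → ℂ)) :=
  {z | ∑ i : Fin q, ‖z.2 i‖ ^ 2 < ∑ i : Fin p, ‖z.1 i‖ ^ 2}

/-- The domain C^{p,q} = {(z,w) : |z|² - |w|² < 0} ⊂ ℂᵖ × ℂ^q. -/
def Cpq (p q : ℕ) : Set ((Fin p → ℂ) × (Fin q → ℂ)) :=
  {z | ∑ i : Fin p, ‖z.1 i‖ ^ 2 < ∑ i : Fin q, ‖z.2 i‖ ^ 2}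

set_option linter.unusedSectionVars false
set_option linter.unusedVariables false





section IdThm
variable {E F : Type*} [NormedAddCommGroup E] [NormedSpace ℂ E]
  [NormedAddCommGroup F] [NormedSpace ℂ F] [CompleteSpace F]

/-- Holomorphic + bounded by M on ball c r ⇒ Lipschitz-type bound on ball c (r/4). -/
lemma lip_of_bounded {f : E → F} {c : E} {r M : ℝ} (hr : 0 < r)
    (hf : DifferentiableOn ℂ f (ball c r)) (hM : ∀ z ∈ ball c r, ‖f z‖ ≤ M)
    {a b : E} (ha : a ∈ ball c (r/4)) (hb : b ∈ ball c (r/4)) :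
    dist (f a) (f b) ≤ (2*M+1) * (4/(3*r)) * dist a b := by
  rcases eq_or_ne b a with rfl | hne
  · simp
  have hM0 : 0 ≤ M := le_trans (norm_nonneg _) (hM c (mem_ball_self hr))
  set v := b - a with hv
  have hvpos : 0 < ‖v‖ := by
    simpa [hv, sub_ne_zero] using hne
  set T : ℝ := (3*r/4)/‖v‖ with hT
  have hTpos : 0 < T := by positivity
  have hab : ‖v‖ < r/2 := by
    have := dist_triangle b c a
    rw [dist_comm c a] at this
    have h1 : dist b c < r/4 := mem_ball.1 hb
    have h2 : dist a c < r/4 := mem_ball.1 ha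
    calc ‖v‖ = dist b a := by rw [dist_eq_norm]
    _ ≤ dist b c + dist c a := dist_triangle _ _ _
    _ < r/4 + r/4 := by rw [dist_comm c a]; exact add_lt_add h1 h2
    _ = r/2 := by ring
  have hT1 : 1 < T := by
    rw [hT, lt_div_iff₀ hvpos, one_mul]
    linarith
  set φ : ℂ → F := fun t => f (a + t • v) with hφ
  have hmaps : ∀ t : ℂ, t ∈ ball (0:ℂ) T → a + t • v ∈ ball c r := by
    intro t ht
    have htn : ‖t‖ < T := by simpa [mem_ball, dist_eq_norm] using ht
    have : ‖a + t • v - c‖ ≤ ‖a - c‖ + ‖t‖ * ‖v‖ := by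
      calc ‖a + t • v - c‖ = ‖(a - c) + t • v‖ := by congr 1; abel
      _ ≤ ‖a - c‖ + ‖t • v‖ := norm_add_le _ _
      _ = ‖a - c‖ + ‖t‖ * ‖v‖ := by rw [norm_smul]
    have h2 : ‖a - c‖ < r/4 := by simpa [mem_ball, dist_eq_norm] using ha
    have h3 : ‖t‖ * ‖v‖ < T * ‖v‖ := by
      exact mul_lt_mul_of_pos_right htn hvpos
    have h4 : T * ‖v‖ = 3*r/4 := by
      rw [hT]; field_simp
    rw [mem_ball, dist_eq_norm]
    calc ‖a + t • v - c‖ ≤ ‖a - c‖ + ‖t‖ * ‖v‖ := this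
    _ < r/4 + 3*r/4 := by rw [← h4]; exact add_lt_add h2 h3
    _ = r := by ring
  have hφd : DifferentiableOn ℂ φ (ball (0:ℂ) T) := by
    intro t ht
    have : DifferentiableAt ℂ φ t := by
      have h1 : DifferentiableAt ℂ (fun t : ℂ => a + t • v) t :=
        (differentiableAt_const a).add (differentiableAt_id.smul_const v)
      exact (hf.differentiableAt (isOpen_ball.mem_nhds (hmaps t ht))).comp t h1
    exact this.differentiableWithinAt
  have hφmaps : MapsTo φ (ball (0:ℂ) T) (ball (φ 0) (2*M+1)) := by
    intro t ht
    have h0 : (0:ℂ) ∈ ball (0:ℂ) T := mem_ball_self hTpos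
    have e1 : ‖φ t‖ ≤ M := hM _ (hmaps t ht)
    have e2 : ‖φ 0‖ ≤ M := hM _ (hmaps 0 h0)
    rw [mem_ball, dist_eq_norm]
    calc ‖φ t - φ 0‖ ≤ ‖φ t‖ + ‖φ 0‖ := norm_sub_le _ _
    _ ≤ M + M := add_le_add e1 e2
    _ < 2*M+1 := by linarith
  have h1mem : (1:ℂ) ∈ ball (0:ℂ) T := by
    simpa [mem_ball, dist_eq_norm] using hT1
  have key := Complex.dist_le_div_mul_dist_of_mapsTo_ball hφd (hφmaps.mono_right ball_subset_closedBall) h1mem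
  have hφ1 : φ 1 = f b := by simp [hφ, hv]
  have hφ0 : φ 0 = f a := by simp [hφ]
  rw [hφ1, hφ0] at key
  have hd10 : dist (1:ℂ) 0 = 1 := by simp
  rw [hd10, mul_one] at key
  have : (2*M+1)/T = (2*M+1) * (4/(3*r)) * ‖v‖ := by
    rw [hT]; field_simp
  rw [this] at key
  rw [dist_comm (f a) (f b)]
  calc dist (f b) (f a) ≤ (2*M+1) * (4/(3*r)) * ‖v‖ := key
  _ = (2*M+1) * (4/(3*r)) * dist a b := by rw [hv, ← dist_eq_norm, dist_comm]



lemma eq_on_ball_of_ev {f g : E → F} {x : E} {r : ℝ}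
    (hf : DifferentiableOn ℂ f (ball x r)) (hg : DifferentiableOn ℂ g (ball x r))
    {y : E} (hy : y ∈ ball x (r/4)) (hloc : ∀ᶠ w in 𝓝 y, f w = g w) :
    ∀ z ∈ ball x (r/4), f z = g z := by
  intro z hz
  have hr : 0 < r := by
    have := mem_ball.1 hy
    have := dist_nonneg (x := y) (y := x)
    linarith
  set L : ℂ → E := fun t => y + t • (z - y) with hL
  have hLcont : Continuous L := by fun_prop
  have hL0 : L 0 = y := by simp [hL]
  have hL1 : L 1 = z := by simp [hL]
  have hzy : ‖z - y‖ < r/2 := by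
    calc ‖z - y‖ = dist z y := (dist_eq_norm _ _).symm
    _ ≤ dist z x + dist x y := dist_triangle _ _ _
    _ < r/4 + r/4 := add_lt_add (mem_ball.1 hz) (by rw [dist_comm]; exact mem_ball.1 hy)
    _ = r/2 := by ring
  have hmaps : ∀ t : ℂ, t ∈ ball (0:ℂ) (3/2) → L t ∈ ball x r := by
    intro t ht
    have htn : ‖t‖ < 3/2 := by simpa [mem_ball, dist_eq_norm] using ht
    have h2 : ‖y - x‖ < r/4 := by simpa [mem_ball, dist_eq_norm] using hy
    rw [mem_ball, dist_eq_norm]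
    calc ‖L t - x‖ = ‖(y - x) + t • (z - y)‖ := by rw [hL]; congr 1; show y + t • (z - y) - x = (y - x) + t • (z - y); abel
    _ ≤ ‖y - x‖ + ‖t‖ * ‖z - y‖ := by
        refine (norm_add_le _ _).trans ?_
        rw [norm_smul]
    _ ≤ ‖y - x‖ + (3/2) * ‖z - y‖ := by
        gcongr
    _ < r/4 + (3/2) * (r/2) := by
        gcongr
    _ ≤ r := by linarith
  set φ : ℂ → F := fun t => f (L t) - g (L t) with hφ
  have hφd : DifferentiableOn ℂ φ (ball (0:ℂ) (3/2)) := by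
    intro t ht
    have hLd : DifferentiableAt ℂ L t :=
      (differentiableAt_const y).add (differentiableAt_id.smul_const (z - y))
    have h1 : DifferentiableAt ℂ (fun t => f (L t)) t :=
      (hf.differentiableAt (isOpen_ball.mem_nhds (hmaps t ht))).comp t hLd
    have h2 : DifferentiableAt ℂ (fun t => g (L t)) t :=
      (hg.differentiableAt (isOpen_ball.mem_nhds (hmaps t ht))).comp t hLd
    exact (h1.sub h2).differentiableWithinAt
  have hφan : AnalyticOnNhd ℂ φ (ball (0:ℂ) (3/2)) :=
    hφd.analyticOnNhd isOpen_ball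
  have h0mem : (0:ℂ) ∈ ball (0:ℂ) (3/2) := by norm_num [mem_ball]
  have hev : φ =ᶠ[𝓝 (0:ℂ)] 0 := by
    have hT : Tendsto L (𝓝 0) (𝓝 y) := by
      rw [← hL0]; exact hLcont.continuousAt
    filter_upwards [hT.eventually hloc] with t ht
    simp [hφ, sub_eq_zero, ht]
  have := hφan.eqOn_zero_of_preconnected_of_eventuallyEq_zero
    (convex_ball (0:ℂ) (3/2)).isPreconnected h0mem hev
  have h1mem : (1:ℂ) ∈ ball (0:ℂ) (3/2) := by norm_num [mem_ball]
  have := this h1mem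
  simpa [hφ, hL1, sub_eq_zero] using this

/-- Identity theorem for differentiable functions on a preconnected open set. -/
lemma eqOn_of_preconnected_open {f g : E → F} {U V : Set E}
    (hU : IsOpen U) (hUc : IsPreconnected U)
    (hf : DifferentiableOn ℂ f U) (hg : DifferentiableOn ℂ g U)
    (hV : IsOpen V) (hVU : V ⊆ U) (hVne : V.Nonempty) (heq : EqOn f g V) :
    EqOn f g U := by
  set S : Set E := {x | ∀ᶠ w in 𝓝 x, f w = g w} with hS
  have hSopen : IsOpen S := isOpen_setOf_eventually_nhds
  have hkey : U ∩ closure S ⊆ S := by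
    rintro x ⟨hxU, hxcl⟩
    obtain ⟨r, hr, hball⟩ := Metric.isOpen_iff.1 hU x hxU
    obtain ⟨y, hyS, hyd⟩ := Metric.mem_closure_iff.1 hxcl (r/4) (by linarith)
    have hy : y ∈ ball x (r/4) := by rwa [mem_ball, dist_comm]
    have hfd : DifferentiableOn ℂ f (ball x r) := hf.mono hball
    have hgd : DifferentiableOn ℂ g (ball x r) := hg.mono hball
    have hall := eq_on_ball_of_ev hfd hgd hy hyS
    rw [hS, mem_setOf_eq]
    filter_upwards [isOpen_ball.mem_nhds (mem_ball_self (by linarith : (0:ℝ) < r/4))]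
      with w hw using hall w hw
  have hsub : U ⊆ S ∪ (closure S)ᶜ := by
    intro x hx
    by_cases hxc : x ∈ closure S
    · exact Or.inl (hkey ⟨hx, hxc⟩)
    · exact Or.inr hxc
  have hdisj : Disjoint S (closure S)ᶜ :=
    Set.disjoint_left.2 fun x hx hx2 => hx2 (subset_closure hx)
  obtain ⟨v, hv⟩ := hVne
  have hvS : v ∈ S := by
    rw [hS, mem_setOf_eq]
    filter_upwards [hV.mem_nhds hv] with w hw using heq hw
  have hUS : U ⊆ S :=
    hUc.subset_left_of_subset_union hSopen (isClosed_closure.isOpen_compl) hdisj hsub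
      ⟨v, hVU hv, hvS⟩
  intro x hx
  exact (hUS hx).self_of_nhds

end IdThm

namespace HartogsAux

variable (p q : ℕ)

abbrev W := (Fin p → ℂ) × (Fin q → ℂ)

noncomputable def sz (x : W p q) : ℝ := ∑ i : Fin p, ‖x.1 i‖ ^ 2
noncomputable def sw (x : W p q) : ℝ := ∑ j : Fin q, ‖x.2 j‖ ^ 2

variable [NeZero p]

noncomputable def sA (x : W p q) : ℝ := ∑ i ∈ Finset.univ.erase (0 : Fin p), ‖x.1 i‖ ^ 2

variable {p q}

lemma sz_nonneg (x : W p q) : 0 ≤ sz p q x :=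
  Finset.sum_nonneg fun i _ => by positivity

lemma sw_nonneg (x : W p q) : 0 ≤ sw p q x :=
  Finset.sum_nonneg fun i _ => by positivity

lemma sA_nonneg (x : W p q) : 0 ≤ sA p q x :=
  Finset.sum_nonneg fun i _ => by positivity

lemma sA_le_sz (x : W p q) : sA p q x ≤ sz p q x :=
  Finset.sum_le_sum_of_subset_of_nonneg (Finset.erase_subset _ _)
    (fun i _ _ => by positivity)

lemma sz_eq (x : W p q) : sz p q x = ‖x.1 0‖^2 + sA p q x := by
  rw [sz, sA, ← Finset.add_sum_erase _ _ (Finset.mem_univ (0 : Fin p))]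

lemma mem_Dpq {x : W p q} : x ∈ Dpq p q ↔ sw p q x < sz p q x := Iff.rfl
lemma mem_Cpq {x : W p q} : x ∈ Cpq p q ↔ sz p q x < sw p q x := Iff.rfl

lemma continuous_sz : Continuous (sz p q) :=
  continuous_finset_sum _ fun i _ => (((continuous_apply i).comp continuous_fst).norm).pow 2

lemma continuous_sw : Continuous (sw p q) :=
  continuous_finset_sum _ fun i _ => (((continuous_apply i).comp continuous_snd).norm).pow 2

lemma continuous_sA : Continuous (sA p q) :=
  continuous_finset_sum _ fun i _ => (((continuous_apply i).comp continuous_fst).norm).pow 2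

lemma isOpen_Dpq : IsOpen (Dpq p q) := isOpen_lt continuous_sw continuous_sz

lemma isOpen_Cpq : IsOpen (Cpq p q) := isOpen_lt continuous_sz continuous_sw

/-- scaling behaviour -/
lemma sw_smul (b : ℝ) (x : W p q) : sw p q (b • x) = b^2 * sw p q x := by
  rw [sw, sw, Finset.mul_sum]
  refine Finset.sum_congr rfl fun j _ => ?_
  have : (b • x).2 j = b • (x.2 j) := rfl
  rw [this, norm_smul, Real.norm_eq_abs, mul_pow, _root_.sq_abs]

lemma sA_smul (b : ℝ) (x : W p q) : sA p q (b • x) = b^2 * sA p q x := by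
  rw [sA, sA, Finset.mul_sum]
  refine Finset.sum_congr rfl fun j _ => ?_
  have : (b • x).1 j = b • (x.1 j) := rfl
  rw [this, norm_smul, Real.norm_eq_abs, mul_pow, _root_.sq_abs]

/-- closure of Dpq -/
lemma closure_Dpq : closure (Dpq p q) = {x : W p q | sw p q x ≤ sz p q x} := by
  apply Subset.antisymm
  · have : IsClosed {x : W p q | sw p q x ≤ sz p q x} :=
      isClosed_le continuous_sw continuous_sz
    exact closure_minimal (fun x hx => (mem_Dpq.1 hx).le) this
  · intro x hx
    rcases lt_or_eq_of_le (mem_setOf_eq ▸ hx) with h | h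
    · exact subset_closure h
    · -- boundary case
      by_cases hz : sz p q x = 0
      · -- then sw x = 0 too, x = 0
        have hw : sw p q x = 0 := by rw [h, hz]
        have hx1 : x.1 = 0 := by
          funext i
          have : ∀ i ∈ Finset.univ, (0:ℝ) ≤ ‖x.1 i‖^2 := fun i _ => by positivity
          have := (Finset.sum_eq_zero_iff_of_nonneg this).1 hz i (Finset.mem_univ i)
          have : ‖x.1 i‖ = 0 := by
            nlinarith [norm_nonneg (x.1 i)]
          simpa using this
        have hx2 : x.2 = 0 := by
          funext j
          have : ∀ j ∈ Finset.univ, (0:ℝ) ≤ ‖x.2 j‖^2 := fun j _ => by positivity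
          have := (Finset.sum_eq_zero_iff_of_nonneg this).1 hw j (Finset.mem_univ j)
          have : ‖x.2 j‖ = 0 := by
            nlinarith [norm_nonneg (x.2 j)]
          simpa using this
        have hx0 : x = 0 := Prod.ext hx1 hx2
        -- approximate 0 by ((t,...,t), 0)
        rw [mem_closure_iff_seq_limit]
        refine ⟨fun n => (1/(n+1) : ℝ) • (((fun _ => (1:ℂ)), 0) : W p q), fun n => ?_, ?_⟩
        · rw [mem_Dpq]
          have hsw : sw p q ((1/(n+1) : ℝ) • ((fun _ => (1:ℂ)), 0)) = 0 := by
            rw [sw_smul]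
            simp [sw]
          have hsz : sz p q ((1/(n+1) : ℝ) • ((fun _ => (1:ℂ)), 0) : W p q)
              = (1/(n+1):ℝ)^2 * p := by
            have : sz p q (((fun _ => (1:ℂ)), 0) : W p q) = p := by
              simp [sz]
            rw [show sz p q ((1/(n+1) : ℝ) • ((fun _ => (1:ℂ)), 0) : W p q)
                = (1/(n+1):ℝ)^2 * sz p q (((fun _ => (1:ℂ)), 0) : W p q) from ?_, this]
            · rw [sz, sz, Finset.mul_sum]
              refine Finset.sum_congr rfl fun j _ => ?_
              have : ((1/(n+1) : ℝ) • (((fun _ => (1:ℂ)), 0) : W p q)).1 j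
                  = (1/(n+1) : ℝ) • ((1:ℂ)) := rfl
              rw [this, norm_smul, Real.norm_eq_abs, mul_pow, _root_.sq_abs]
          rw [hsw, hsz]
          have hp : 0 < (p:ℝ) := by
            have := NeZero.pos p
            exact_mod_cast this
          positivity
        · rw [hx0]
          have : Tendsto (fun n : ℕ => (1/(n+1) : ℝ)) atTop (𝓝 0) := by
            exact tendsto_one_div_add_atTop_nhds_zero_nat
          have := this.smul_const (((fun _ => (1:ℂ)), 0) : W p q)
          simpa using this
      · -- sz x > 0 : approximate by ((1+t) • z, w)
        have hzpos : 0 < sz p q x := lt_of_le_of_ne (sz_nonneg x) (Ne.symm hz)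
        rw [mem_closure_iff_seq_limit]
        refine ⟨fun n => (((1 + 1/(n+1) : ℝ)) • x.1, x.2), fun n => ?_, ?_⟩
        · rw [mem_Dpq]
          have h1 : sw p q ((((1 + 1/(n+1) : ℝ)) • x.1, x.2) : W p q) = sw p q x := rfl
          have h2 : sz p q ((((1 + 1/(n+1) : ℝ)) • x.1, x.2) : W p q)
              = (1 + 1/(n+1) : ℝ)^2 * sz p q x := by
            rw [sz, sz, Finset.mul_sum]
            refine Finset.sum_congr rfl fun j _ => ?_
            have : ((((1 + 1/(n+1) : ℝ)) • x.1, x.2) : W p q).1 j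
                = (1 + 1/(n+1) : ℝ) • (x.1 j) := rfl
            rw [this, norm_smul, Real.norm_eq_abs, mul_pow, _root_.sq_abs]
          rw [h1, h2, ← h]
          have hn : (1:ℝ) < (1 + 1/(n+1) : ℝ) := by
            have : (0:ℝ) < 1/(n+1) := by positivity
            linarith
          have hswpos : 0 < sw p q x := by rw [h]; exact hzpos
          have h3 : (1:ℝ) < (1 + 1/(n+1))^2 := by nlinarith [hn]
          have := mul_lt_mul_of_pos_right h3 hswpos
          linarith
        · have h1 : Tendsto (fun n : ℕ => (1 + 1/(n+1) : ℝ)) atTop (𝓝 1) := by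
            have : Tendsto (fun n : ℕ => (1/(n+1) : ℝ)) atTop (𝓝 0) := by
              exact tendsto_one_div_add_atTop_nhds_zero_nat
            simpa using (tendsto_const_nhds.add this)
          have h2 := (h1.smul_const x.1).prodMk_nhds (tendsto_const_nhds (x := x.2))
          simpa using h2

lemma Cpq_eq_compl_closure : Cpq p q = (closure (Dpq p q))ᶜ := by
  rw [closure_Dpq]
  ext x
  simp [mem_Cpq, not_le]

noncomputable def ins (ζ : ℂ) (x : W p q) : W p q :=
  (fun i => if i = 0 then ζ else x.1 i, x.2)

lemma ins_self (x : W p q) : ins (x.1 0) x = x := by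
  refine Prod.ext ?_ rfl
  funext i
  by_cases h : i = 0 <;> simp [ins, h]

lemma ins_fst_zero (ζ : ℂ) (x : W p q) : (ins ζ x).1 0 = ζ := by simp [ins]

lemma sA_ins (ζ : ℂ) (x : W p q) : sA p q (ins ζ x) = sA p q x := by
  rw [sA, sA]
  refine Finset.sum_congr rfl fun i hi => ?_
  have : i ≠ 0 := Finset.ne_of_mem_erase hi
  simp [ins, this]

lemma sw_ins (ζ : ℂ) (x : W p q) : sw p q (ins ζ x) = sw p q x := rfl

lemma sz_ins (ζ : ℂ) (x : W p q) : sz p q (ins ζ x) = ‖ζ‖^2 + sA p q x := by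
  rw [sz_eq, ins_fst_zero, sA_ins]

noncomputable def insF : W p q × ℂ → W p q := fun v => ins v.2 v.1

lemma differentiable_insF : Differentiable ℂ (insF (p := p) (q := q)) := by
  apply Differentiable.prodMk
  · rw [differentiable_pi]
    intro i
    by_cases h : i = 0
    · simp only [insF, ins, if_pos h]
      exact differentiable_snd
    · simp only [insF, ins, if_neg h]
      fun_prop
  · exact differentiable_snd.comp differentiable_fst

lemma continuous_insF : Continuous (insF (p := p) (q := q)) :=
  differentiable_insF.continuous

noncomputable def Om (R : ℝ) : Set (W p q) :=
  {x | ‖x.1 0‖ < R ∧ sw p q x < R^2 + sA p q x}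

noncomputable def Aset (R : ℝ) : Set (W p q) :=
  {x | ‖x.1 0‖ < R ∧ sw p q x < sA p q x}

noncomputable def Ainf : Set (W p q) := {x | sw p q x < sA p q x}

lemma cont_fst0 : Continuous (fun x : W p q => ‖x.1 0‖) :=
  ((continuous_apply (0 : Fin p)).comp continuous_fst).norm

lemma isOpen_Om (R : ℝ) : IsOpen (Om (p := p) (q := q) R) :=
  (isOpen_lt cont_fst0 continuous_const).inter
    (isOpen_lt continuous_sw (continuous_const.add continuous_sA))

lemma isOpen_Aset (R : ℝ) : IsOpen (Aset (p := p) (q := q) R) :=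
  (isOpen_lt cont_fst0 continuous_const).inter (isOpen_lt continuous_sw continuous_sA)

lemma isOpen_Ainf : IsOpen (Ainf (p := p) (q := q)) :=
  isOpen_lt continuous_sw continuous_sA

lemma Aset_subset_Om {R : ℝ} (hR : 0 < R) : Aset (p := p) (q := q) R ⊆ Om R := by
  rintro x ⟨h1, h2⟩
  exact ⟨h1, by nlinarith [sA_nonneg (p := p) (q := q) x]⟩

lemma Ainf_subset_Dpq : Ainf (p := p) (q := q) ⊆ Dpq p q := by
  intro x hx
  exact mem_Dpq.2 (lt_of_lt_of_le hx (sA_le_sz x))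

lemma Aset_subset_Ainf (R : ℝ) : Aset (p := p) (q := q) R ⊆ Ainf := fun _ h => h.2

lemma Om_mono {R R' : ℝ} (h0 : 0 ≤ R) (h : R ≤ R') :
    Om (p := p) (q := q) R ⊆ Om R' := by
  rintro x ⟨h1, h2⟩
  refine ⟨lt_of_lt_of_le h1 h, lt_of_lt_of_le h2 ?_⟩
  have : R^2 ≤ R'^2 := by nlinarith
  linarith

lemma Aset_mono {R R' : ℝ} (h : R ≤ R') :
    Aset (p := p) (q := q) R ⊆ Aset R' := by
  rintro x ⟨h1, h2⟩
  exact ⟨lt_of_lt_of_le h1 h, h2⟩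

lemma zero_mem_Om {R : ℝ} (hR : 0 < R) : (0 : W p q) ∈ Om R := by
  constructor
  · simpa using hR
  · have h1 : sw p q (0 : W p q) = 0 := by simp [sw]
    have h2 : sA p q (0 : W p q) = 0 := by simp [sA]
    rw [h1, h2]
    nlinarith

lemma isPreconnected_Om {R : ℝ} (hR : 0 < R) :
    IsPreconnected (Om (p := p) (q := q) R) := by
  have hpath : IsPathConnected (Om (p := p) (q := q) R) := by
    refine ⟨0, zero_mem_Om hR, fun {y} hy => ?_⟩
    apply JoinedIn.of_segment_subset
    rintro u hu
    rw [segment_eq_image] at hu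
    obtain ⟨b, hb, rfl⟩ := hu
    simp only [smul_zero, zero_add] at *
    have hb0 : (0:ℝ) ≤ b := hb.1
    have hb1 : b ≤ 1 := hb.2
    obtain ⟨hy1, hy2⟩ := hy
    constructor
    · have : (b • y).1 0 = b • (y.1 0) := rfl
      rw [this, norm_smul, Real.norm_eq_abs, _root_.abs_of_nonneg hb0]
      calc b * ‖y.1 0‖ ≤ 1 * ‖y.1 0‖ := by
            exact mul_le_mul_of_nonneg_right hb1 (norm_nonneg _)
      _ = ‖y.1 0‖ := one_mul _
      _ < R := hy1
    · rw [sw_smul, sA_smul]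
      rcases eq_or_lt_of_le hb0 with hb' | hb'
      · rw [← hb']
        norm_num
        positivity
      · have h5 := mul_lt_mul_of_pos_left hy2 (by positivity : (0:ℝ) < b^2)
        have hbsq : b^2 ≤ 1 := by nlinarith
        have h6 : b^2*R^2 ≤ 1*R^2 := mul_le_mul_of_nonneg_right hbsq (sq_nonneg R)
        rw [one_mul] at h6
        linarith
  exact hpath.isConnected.isPreconnected

lemma Aset_nonempty (hp : 2 ≤ p) {R : ℝ} (hR : 0 < R) :
    (Aset (p := p) (q := q) R).Nonempty := by
  refine ⟨((fun i => if i = 0 then 0 else 1), 0), ?_, ?_⟩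
  · simpa using hR
  · have h1 : sw p q ((fun i => if i = 0 then 0 else (1:ℂ)), 0) = 0 := by simp [sw]
    have h2 : sA p q ((fun i => if i = 0 then 0 else (1:ℂ)), 0) = (p - 1 : ℕ) := by
      rw [sA]
      rw [show ∑ i ∈ Finset.univ.erase (0 : Fin p),
          ‖((fun i => if i = 0 then 0 else (1:ℂ)), (0 : Fin q → ℂ)).1 i‖^2
          = ∑ _i ∈ Finset.univ.erase (0 : Fin p), (1:ℝ) from ?_]
      · rw [Finset.sum_const, Finset.card_erase_of_mem (Finset.mem_univ _)]
        simp
      · refine Finset.sum_congr rfl fun i hi => ?_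
        have : i ≠ 0 := Finset.ne_of_mem_erase hi
        simp [this]
    rw [h1, h2]
    have : 1 ≤ p - 1 := by omega
    exact_mod_cast Nat.lt_of_lt_of_le Nat.zero_lt_one (by exact_mod_cast this)

variable {h : W p q → W p q}

noncomputable def Psi (h : W p q → W p q) : W p q × ℂ → W p q :=
  fun v => (v.2 * Complex.I) • ((v.2 - v.1.1 0)⁻¹ • h (insF v))

def Oset : Set (W p q × ℂ) := {v | v.2 ≠ v.1.1 0 ∧ insF v ∈ Dpq p q}

lemma isOpen_Oset : IsOpen (Oset (p := p) (q := q)) := by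
  have h1 : IsOpen {v : W p q × ℂ | v.2 ≠ v.1.1 0} :=
    isOpen_ne_fun continuous_snd
      (((continuous_apply (0 : Fin p)).comp continuous_fst).comp continuous_fst)
  have h2 : IsOpen {v : W p q × ℂ | insF v ∈ Dpq p q} :=
    isOpen_Dpq.preimage continuous_insF
  exact h1.inter h2

lemma diffOn_Psi (hh : DifferentiableOn ℂ h (Dpq p q)) :
    DifferentiableOn ℂ (Psi h) (Oset (p := p) (q := q)) := by
  intro v hv
  apply DifferentiableAt.differentiableWithinAt
  have hsnd : DifferentiableAt ℂ (fun v : W p q × ℂ => v.2) v := differentiableAt_snd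
  have hfst0 : DifferentiableAt ℂ (fun v : W p q × ℂ => v.1.1 0) v :=
    by fun_prop
  have hinv : DifferentiableAt ℂ (fun v : W p q × ℂ => (v.2 - v.1.1 0)⁻¹) v :=
    (hsnd.sub hfst0).inv (sub_ne_zero.2 hv.1)
  have hins : DifferentiableAt ℂ (fun v : W p q × ℂ => h (insF v)) v :=
    (hh.differentiableAt (isOpen_Dpq.mem_nhds hv.2)).comp v
      differentiable_insF.differentiableAt
  exact (hsnd.mul (differentiableAt_const Complex.I)).smul (hinv.smul hins)

noncomputable def FR (h : W p q → W p q) (R : ℝ) : W p q → W p q :=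
  fun x => (2 * Real.pi * Complex.I : ℂ)⁻¹ •
    ∫ θ in Ioc (0:ℝ) (2 * Real.pi), Psi h (x, circleMap 0 R θ)

lemma two_pi_I_ne_zero' : (2 * Real.pi * Complex.I : ℂ) ≠ 0 :=
  mul_ne_zero (mul_ne_zero two_ne_zero (Complex.ofReal_ne_zero.2 Real.pi_ne_zero))
    Complex.I_ne_zero

lemma FR_eqOn_Aset (hh : DifferentiableOn ℂ h (Dpq p q)) {R : ℝ} (hR : 0 < R) :
    EqOn (FR h R) h (Aset (p := p) (q := q) R) := by
  intro x hx
  have hdiff : Differentiable ℂ (fun ζ : ℂ => h (ins ζ x)) := by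
    intro ζ
    have hmem : ins ζ x ∈ Dpq p q := by
      rw [mem_Dpq, sz_ins, sw_ins]
      nlinarith [hx.2, norm_nonneg ζ, sq_nonneg ‖ζ‖]
    have hinsd : DifferentiableAt ℂ (fun ζ : ℂ => ins ζ x) ζ := by
      have heq : (fun ζ : ℂ => ins ζ x)
          = (insF (p := p) (q := q)) ∘ (fun ζ : ℂ => (x, ζ)) := rfl
      rw [heq]
      exact (differentiable_insF.differentiableAt).comp ζ
        (DifferentiableAt.prodMk (differentiableAt_const x) differentiableAt_id)
    exact (hh.differentiableAt (isOpen_Dpq.mem_nhds hmem)).comp ζ hinsd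
  have hw : x.1 0 ∈ ball (0:ℂ) R := by
    simpa [mem_ball, dist_eq_norm] using hx.1
  have key := DiffContOnCl.circleIntegral_sub_inv_smul (R := R) (c := 0)
    (f := fun ζ => h (ins ζ x)) (hdiff.diffContOnCl) hw
  have hrw : (∮ z in C(0, R), (z - x.1 0)⁻¹ • h (ins z x))
      = ∫ θ in Ioc (0:ℝ) (2*Real.pi), Psi h (x, circleMap 0 R θ) := by
    rw [circleIntegral, intervalIntegral.integral_of_le Real.two_pi_pos.le]
    apply setIntegral_congr_fun measurableSet_Ioc
    intro θ _
    simp only [deriv_circleMap]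
    rfl
  show (2 * Real.pi * Complex.I : ℂ)⁻¹ •
      (∫ θ in Ioc (0:ℝ) (2 * Real.pi), Psi h (x, circleMap 0 R θ)) = h x
  rw [← hrw, key]
  show (2 * Real.pi * Complex.I : ℂ)⁻¹ •
      ((2 * Real.pi * Complex.I : ℂ) • h (ins (x.1 0) x)) = h x
  rw [smul_smul, inv_mul_cancel₀ two_pi_I_ne_zero', one_smul, ins_self]

lemma FR_diffOn (hh : DifferentiableOn ℂ h (Dpq p q)) {R : ℝ} (hR : 0 < R) :
    DifferentiableOn ℂ (FR h R) (Om (p := p) (q := q) R) := by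
  intro x₀ hx₀
  apply DifferentiableAt.differentiableWithinAt
  set μ : Measure ℝ := volume.restrict (Ioc (0:ℝ) (2*Real.pi)) with hμ
  haveI : IsFiniteMeasure μ := by
    constructor
    rw [hμ, Measure.restrict_apply_univ]
    exact measure_Ioc_lt_top
  set T : Set (W p q × ℂ) := {x₀} ×ˢ sphere (0:ℂ) R with hT
  have hTcomp : IsCompact T := isCompact_singleton.prod (isCompact_sphere 0 R)
  have hTsub : T ⊆ Oset := by
    intro v hv
    have hveq : v.1 = x₀ := hv.1
    have hζR : ‖v.2‖ = R := by simpa using hv.2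
    refine ⟨?_, ?_⟩
    · intro hcon
      rw [hcon, hveq] at hζR
      exact absurd hx₀.1 (by rw [hζR]; exact lt_irrefl R)
    · show insF v ∈ Dpq p q
      have h2 : insF v = ins v.2 v.1 := rfl
      rw [h2, mem_Dpq, sz_ins, sw_ins, hζR, hveq]
      exact hx₀.2
  obtain ⟨δ, hδpos, hδsub⟩ := hTcomp.exists_thickening_subset_open isOpen_Oset hTsub
  set K := cthickening (δ/2) T with hK
  have hKsub : K ⊆ Oset :=
    subset_trans (cthickening_subset_thickening' hδpos (half_lt_self hδpos) T) hδsub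
  have hKcomp : IsCompact K := hTcomp.cthickening
  have hcont : ContinuousOn (Psi h) (Oset (p := p) (q := q)) := (diffOn_Psi hh).continuousOn
  obtain ⟨M, hM⟩ := hKcomp.exists_bound_of_continuousOn (hcont.mono hKsub)
  have hTK : T ⊆ K := self_subset_cthickening T
  have hballK : ∀ ζ ∈ sphere (0:ℂ) R, ball ((x₀, ζ) : W p q × ℂ) (δ/2) ⊆ K := by
    intro ζ hζ v hv
    exact mem_cthickening_of_dist_le v (x₀, ζ) (δ/2) T ⟨rfl, hζ⟩ (le_of_lt hv)
  have hεpos : (0:ℝ) < δ/8 := by linarith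
  set C := (2*M+1) * (4/(3*(δ/2))) with hC
  have hmemT : ∀ θ : ℝ, ((x₀, circleMap 0 R θ) : W p q × ℂ) ∈ T := by
    intro θ
    exact ⟨rfl, circleMap_mem_sphere 0 hR.le θ⟩
  have hF_meas : ∀ x ∈ ball x₀ (δ/8),
      AEStronglyMeasurable (fun θ => Psi h (x, circleMap 0 R θ)) μ := by
    intro x hx
    have hc : Continuous (fun θ : ℝ => ((x, circleMap 0 R θ) : W p q × ℂ)) :=
      continuous_const.prodMk (continuous_circleMap 0 R)
    have hmaps : ∀ θ : ℝ, ((x, circleMap 0 R θ) : W p q × ℂ) ∈ Oset := by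
      intro θ
      apply hKsub
      apply hballK _ (circleMap_mem_sphere 0 hR.le θ)
      rw [mem_ball]
      have : dist ((x, circleMap 0 R θ) : W p q × ℂ) (x₀, circleMap 0 R θ) = dist x x₀ := by
        rw [Prod.dist_eq]
        simp [dist_nonneg]
      rw [this]
      calc dist x x₀ < δ/8 := mem_ball.1 hx
      _ < δ/2 := by linarith
    exact (hcont.comp_continuous hc hmaps).aestronglyMeasurable
  have hF_int : Integrable (fun θ => Psi h (x₀, circleMap 0 R θ)) μ := by
    have hc : Continuous (fun θ : ℝ => ((x₀, circleMap 0 R θ) : W p q × ℂ)) :=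
      continuous_const.prodMk (continuous_circleMap 0 R)
    have hmaps : ∀ θ : ℝ, ((x₀, circleMap 0 R θ) : W p q × ℂ) ∈ Oset := fun θ =>
      hKsub (hTK (hmemT θ))
    exact (hcont.comp_continuous hc hmaps).integrableOn_Ioc
  set J : (W p q) →L[ℂ] (W p q × ℂ) := (ContinuousLinearMap.id ℂ (W p q)).prod 0 with hJ
  set F' : ℝ → (W p q) →L[ℂ] (W p q) :=
    fun θ => (fderiv ℂ (Psi h) (x₀, circleMap 0 R θ)).comp J with hF'
  have hF'_meas : AEStronglyMeasurable F' μ := by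
    have hmeas1 : Measurable (fderiv ℂ (Psi h)) := measurable_fderiv ℂ (Psi h)
    have hmeas2 : Measurable fun θ : ℝ => ((x₀, circleMap 0 R θ) : W p q × ℂ) :=
      (continuous_const.prodMk (continuous_circleMap 0 R)).measurable
    have hcontcomp : Continuous fun L : (W p q × ℂ) →L[ℂ] (W p q) => L.comp J :=
      ((ContinuousLinearMap.compL ℂ (W p q) (W p q × ℂ) (W p q)).flip J).continuous
    exact ((hcontcomp.measurable.comp (hmeas1.comp hmeas2))).aestronglyMeasurable
  have h_lipsch : ∀ᵐ θ ∂μ, ∀ x ∈ ball x₀ (δ/8),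
      ‖Psi h (x, circleMap 0 R θ) - Psi h (x₀, circleMap 0 R θ)‖ ≤ C * ‖x - x₀‖ := by
    apply ae_of_all
    intro θ x hx
    set ζ := circleMap 0 R θ with hζdef
    have hζ : ζ ∈ sphere (0:ℂ) R := circleMap_mem_sphere 0 hR.le θ
    have hfd : DifferentiableOn ℂ (Psi h) (ball ((x₀, ζ) : W p q × ℂ) (δ/2)) :=
      (diffOn_Psi hh).mono (subset_trans (hballK ζ hζ) hKsub)
    have hMb : ∀ z ∈ ball ((x₀, ζ) : W p q × ℂ) (δ/2), ‖Psi h z‖ ≤ M := fun z hz =>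
      hM _ (hballK ζ hζ hz)
    have hdxx : dist ((x, ζ) : W p q × ℂ) (x₀, ζ) = dist x x₀ := by
      rw [Prod.dist_eq]; simp [dist_nonneg]
    have ha : ((x, ζ) : W p q × ℂ) ∈ ball ((x₀, ζ) : W p q × ℂ) (δ/2/4) := by
      rw [mem_ball, hdxx]
      calc dist x x₀ < δ/8 := mem_ball.1 hx
      _ = δ/2/4 := by ring
    have hb : ((x₀, ζ) : W p q × ℂ) ∈ ball ((x₀, ζ) : W p q × ℂ) (δ/2/4) :=
      mem_ball_self (by linarith)
    have key := lip_of_bounded (by linarith : (0:ℝ) < δ/2) hfd hMb ha hb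
    rw [hdxx] at key
    calc ‖Psi h (x, ζ) - Psi h (x₀, ζ)‖ = dist (Psi h (x, ζ)) (Psi h (x₀, ζ)) :=
          (dist_eq_norm _ _).symm
    _ ≤ C * dist x x₀ := key
    _ = C * ‖x - x₀‖ := by rw [dist_eq_norm]
  have bound_int : Integrable (fun _ : ℝ => C) μ := integrable_const C
  have h_diff : ∀ᵐ θ ∂μ, HasFDerivAt (fun x => Psi h (x, circleMap 0 R θ)) (F' θ) x₀ := by
    apply ae_of_all
    intro θ
    set ζ := circleMap 0 R θ with hζdef
    have hmem : ((x₀, ζ) : W p q × ℂ) ∈ Oset := hKsub (hTK (hmemT θ))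
    have hPsidiff : DifferentiableAt ℂ (Psi h) ((x₀, ζ) : W p q × ℂ) :=
      (diffOn_Psi hh).differentiableAt (isOpen_Oset.mem_nhds hmem)
    have hinner : HasFDerivAt (fun x : W p q => ((x, ζ) : W p q × ℂ)) J x₀ :=
      HasFDerivAt.prodMk (hasFDerivAt_id x₀) (hasFDerivAt_const ζ x₀)
    exact hPsidiff.hasFDerivAt.comp x₀ hinner
  have main := hasFDerivAt_integral_of_dominated_loc_of_lip' (ball_mem_nhds x₀ hεpos) hF_meas hF_int hF'_meas
    h_lipsch bound_int h_diff
  have hdInt : DifferentiableAt ℂ (fun x => ∫ θ, Psi h (x, circleMap 0 R θ) ∂μ) x₀ :=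
    main.2.differentiableAt
  exact hdInt.const_smul ((2 * Real.pi * Complex.I : ℂ)⁻¹)

lemma sz1_pos_of_ne {y : Fin p → ℂ} (hy : y ≠ 0) : 0 < ∑ i, ‖y i‖^2 := by
  obtain ⟨i, hi⟩ := Function.ne_iff.1 hy
  refine Finset.sum_pos' (fun j _ => by positivity) ⟨i, Finset.mem_univ i, ?_⟩
  have : y i ≠ 0 := by simpa using hi
  exact pow_pos (norm_pos_iff.2 this) 2

lemma fst_ne_zero_of_mem_Dpq {x : W p q} (hx : x ∈ Dpq p q) : x.1 ≠ 0 := by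
  intro hcon
  have h1 : sz p q x = 0 := by simp [sz, hcon]
  have h2 := mem_Dpq.1 hx
  have h3 := sw_nonneg (p := p) (q := q) x
  rw [h1] at h2
  linarith

lemma isPreconnected_Dpq (hp : 2 ≤ p) : IsPreconnected (Dpq p q) := by
  have hrank : 1 < Module.rank ℝ (Fin p → ℂ) := by
    have h1 : (Module.finrank ℝ (Fin p → ℂ) : Cardinal) = Module.rank ℝ (Fin p → ℂ) :=
      Module.finrank_eq_rank ℝ (Fin p → ℂ)
    rw [← h1]
    have h2 : Module.finrank ℝ (Fin p → ℂ) = 2 * p := by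
      rw [Module.finrank_pi_fintype]
      simp [Complex.finrank_real_complex, mul_comm]
    rw [h2]
    have : (1:ℕ) < 2 * p := by omega
    exact_mod_cast Nat.cast_lt.2 this
  have hpath0 : IsPathConnected ({(0 : Fin p → ℂ)}ᶜ : Set (Fin p → ℂ)) :=
    isPathConnected_compl_singleton_of_one_lt_rank hrank 0
  set b₀ : W p q := ((fun _ => 1), 0) with hb₀
  have hb₀ne : b₀.1 ≠ 0 := by
    intro hcon
    have := congrFun hcon 0
    simp [hb₀] at this
  have hb₀mem : b₀ ∈ Dpq p q := by
    rw [mem_Dpq]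
    have h1 : sw p q b₀ = 0 := by simp [sw, hb₀]
    rw [h1]
    exact sz1_pos_of_ne hb₀ne
  have haxis : ∀ y : Fin p → ℂ, y ≠ 0 → ((y, 0) : W p q) ∈ Dpq p q := by
    intro y hy
    rw [mem_Dpq]
    have h1 : sw p q ((y, 0) : W p q) = 0 := by simp [sw]
    rw [h1]
    exact sz1_pos_of_ne hy
  have key : ∀ x ∈ Dpq p q, JoinedIn (Dpq p q) x b₀ := by
    intro x hx
    have hx1 : x.1 ≠ 0 := fst_ne_zero_of_mem_Dpq hx
    -- Step 1 : join x to (x.1, 0) along a segment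
    have j1 : JoinedIn (Dpq p q) x (x.1, 0) := by
      apply JoinedIn.of_segment_subset
      intro u hu
      rw [segment_eq_image] at hu
      obtain ⟨t, ht, rfl⟩ := hu
      have h1 : ((1-t) • x + t • ((x.1, 0) : W p q)).1 = x.1 := by
        funext i
        show (1-t) • x.1 i + t • x.1 i = x.1 i
        rw [← add_smul]
        norm_num
      have h2 : ((1-t) • x + t • ((x.1, 0) : W p q)).2 = (1-t) • x.2 := by
        funext j
        show (1-t) • x.2 j + t • (0:ℂ) = (1-t) • x.2 j
        simp
      rw [mem_Dpq]
      have h3 : sz p q ((1-t) • x + t • ((x.1, 0) : W p q)) = sz p q x := by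
        rw [sz, sz, h1]
      have h4 : sw p q ((1-t) • x + t • ((x.1, 0) : W p q)) = (1-t)^2 * sw p q x := by
        rw [sw, h2, sw, Finset.mul_sum]
        refine Finset.sum_congr rfl fun j _ => ?_
        rw [Pi.smul_apply, norm_smul, Real.norm_eq_abs, mul_pow, _root_.sq_abs]
      rw [h3, h4]
      have h5 := mem_Dpq.1 hx
      have h6 : (1-t)^2 ≤ 1 := by nlinarith [ht.1, ht.2]
      nlinarith [sw_nonneg (p := p) (q := q) x]
    -- Step 2 : join (x.1, 0) to b₀ through the axis
    have j2 : JoinedIn (Dpq p q) (x.1, 0) b₀ := by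
      have hj := hpath0.joinedIn x.1 hx1 b₀.1 hb₀ne
      have hj2 := hj.map (f := fun y : Fin p → ℂ => ((y, 0) : W p q))
        (continuous_id.prodMk continuous_const)
      refine hj2.mono ?_
      rintro u ⟨y, hy, rfl⟩
      exact haxis y hy
    exact j1.trans j2
  have hnon : (Dpq p q).Nonempty := ⟨b₀, hb₀mem⟩
  have : IsPathConnected (Dpq p q) := ⟨b₀, hb₀mem, fun {y} hy => (key y hy).symm⟩
  exact this.isConnected.isPreconnected

lemma FR_congr (hp : 2 ≤ p) (hh : DifferentiableOn ℂ h (Dpq p q)) {R R' : ℝ}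
    (hR : 0 < R) (hRR' : R ≤ R') :
    EqOn (FR h R) (FR h R') (Om (p := p) (q := q) R) := by
  have hR' : 0 < R' := lt_of_lt_of_le hR hRR'
  apply eqOn_of_preconnected_open (isOpen_Om R) (isPreconnected_Om hR)
    (FR_diffOn hh hR) ((FR_diffOn hh hR').mono (Om_mono hR.le hRR'))
    (isOpen_Aset R) (Aset_subset_Om hR) (Aset_nonempty hp hR)
  intro x hx
  rw [FR_eqOn_Aset hh hR hx, FR_eqOn_Aset hh hR' (Aset_mono hRR' hx)]

noncomputable def rad (x : W p q) : ℝ := ‖x.1 0‖ + Real.sqrt (sw p q x) + 1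

lemma rad_pos (x : W p q) : 0 < rad x := by
  have h1 := norm_nonneg (x.1 0)
  have h2 := Real.sqrt_nonneg (sw p q x)
  rw [rad]; linarith

lemma rad_continuous : Continuous (rad (p := p) (q := q)) :=
  ((cont_fst0.add (continuous_sw.sqrt)).add continuous_const)

lemma mem_Om_rad (x : W p q) : x ∈ Om (rad x) := by
  have h1 := norm_nonneg (x.1 0)
  have h2 := Real.sqrt_nonneg (sw p q x)
  constructor
  · rw [rad]; linarith
  · have h3 : Real.sqrt (sw p q x) < rad x := by rw [rad]; linarith
    have h4 : sw p q x = (Real.sqrt (sw p q x))^2 :=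
      (Real.sq_sqrt (sw_nonneg x)).symm
    have h5 : (Real.sqrt (sw p q x))^2 < (rad x)^2 := by
      apply pow_lt_pow_left₀ h3 h2
      norm_num
    have h6 := sA_nonneg (p := p) (q := q) x
    rw [h4] at *
    linarith

noncomputable def Ext (h : W p q → W p q) : W p q → W p q := fun x => FR h (rad x) x

lemma Ext_eq_FR (hp : 2 ≤ p) (hh : DifferentiableOn ℂ h (Dpq p q)) {R : ℝ}
    {x : W p q} (hx : rad x ≤ R) : Ext h x = FR h R x := by
  exact FR_congr hp hh (rad_pos x) hx (mem_Om_rad x)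

lemma Ext_diff (hp : 2 ≤ p) (hh : DifferentiableOn ℂ h (Dpq p q)) :
    Differentiable ℂ (Ext h) := by
  intro x₀
  set R : ℝ := rad x₀ + 1 with hRdef
  have hR : 0 < R := by have := rad_pos x₀; rw [hRdef]; linarith
  set U' : Set (W p q) := Om R ∩ {y | rad y < R} with hU'
  have hU'open : IsOpen U' :=
    (isOpen_Om R).inter (isOpen_lt rad_continuous continuous_const)
  have hx₀mem : x₀ ∈ U' := by
    constructor
    · exact Om_mono (rad_pos x₀).le (by rw [hRdef]; linarith) (mem_Om_rad x₀)
    · show rad x₀ < R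
      rw [hRdef]; linarith
  have hEq : ∀ y ∈ U', Ext h y = FR h R y := fun y hy =>
    Ext_eq_FR hp hh (le_of_lt hy.2)
  have hFRdiff : DifferentiableAt ℂ (FR h R) x₀ :=
    (FR_diffOn hh hR).differentiableAt ((isOpen_Om R).mem_nhds hx₀mem.1)
  apply hFRdiff.congr_of_eventuallyEq
  filter_upwards [hU'open.mem_nhds hx₀mem] with y hy using hEq y hy

lemma Ext_eqOn_Dpq (hp : 2 ≤ p) (hh : DifferentiableOn ℂ h (Dpq p q)) :
    EqOn (Ext h) h (Dpq p q) := by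
  have hA : EqOn (Ext h) h (Ainf (p := p) (q := q)) := by
    intro x hx
    have hxA : x ∈ Aset (rad x) := by
      refine ⟨?_, hx⟩
      have h1 := Real.sqrt_nonneg (sw p q x)
      rw [rad]; linarith
    show FR h (rad x) x = h x
    exact FR_eqOn_Aset hh (rad_pos x) hxA
  have hAne : (Ainf (p := p) (q := q)).Nonempty := by
    obtain ⟨a, ha⟩ := Aset_nonempty (q := q) hp one_pos
    exact ⟨a, Aset_subset_Ainf 1 ha⟩
  exact eqOn_of_preconnected_open isOpen_Dpq (isPreconnected_Dpq hp)
    (Ext_diff hp hh).differentiableOn hh isOpen_Ainf Ainf_subset_Dpq hAne hA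

end HartogsAux

open HartogsAux in
lemma ext_exists {p q : ℕ} (hp : 2 ≤ p) (h : W p q → W p q)
    (hh : DifferentiableOn ℂ h (Dpq p q)) :
    ∃ H : W p q → W p q, Differentiable ℂ H ∧ EqOn H h (Dpq p q) := by
  haveI : NeZero p := ⟨by omega⟩
  exact ⟨Ext h, Ext_diff hp hh, Ext_eqOn_Dpq hp hh⟩

open HartogsAux in
lemma main_half (p q : ℕ) (hp : 2 ≤ p) (hq : 2 ≤ q) :
    ∀ f g : W p q → W p q, DifferentiableOn ℂ f (Dpq p q) → DifferentiableOn ℂ g (Dpq p q) →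
      MapsTo f (Dpq p q) (Dpq p q) → MapsTo g (Dpq p q) (Dpq p q) →
      InvOn g f (Dpq p q) (Dpq p q) →
      ∃ F G : W p q → W p q, Differentiable ℂ F ∧ Differentiable ℂ G ∧ EqOn F f (Dpq p q) ∧
        G ∘ F = id ∧ F ∘ G = id ∧ MapsTo F (Cpq p q) (Cpq p q) ∧
        MapsTo G (Cpq p q) (Cpq p q) := by
  intro f g hf hg hfm hgm hinv
  haveI : NeZero p := ⟨by omega⟩
  obtain ⟨F, hFd, hFf⟩ := ext_exists hp f hf
  obtain ⟨G, hGd, hGg⟩ := ext_exists hp g hg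
  have hDne : (Dpq p q).Nonempty := by
    obtain ⟨a, ha⟩ := Aset_nonempty (q := q) hp one_pos
    exact ⟨a, Ainf_subset_Dpq (Aset_subset_Ainf 1 ha)⟩
  have huniv : IsPreconnected (univ : Set (W p q)) :=
    (convex_univ : Convex ℝ (univ : Set (W p q))).isPreconnected
  have hGF : EqOn (G ∘ F) id (Dpq p q) := by
    intro x hx
    show G (F x) = x
    rw [hFf hx, hGg (hfm hx)]
    exact hinv.1 hx
  have hGFid : G ∘ F = id := by
    funext x
    exact eqOn_of_preconnected_open isOpen_univ huniv
      ((hGd.comp hFd).differentiableOn) differentiable_id.differentiableOn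
      isOpen_Dpq (subset_univ _) hDne hGF (mem_univ x)
  have hFG : EqOn (F ∘ G) id (Dpq p q) := by
    intro x hx
    show F (G x) = x
    rw [hGg hx, hFf (hgm hx)]
    exact hinv.2 hx
  have hFGid : F ∘ G = id := by
    funext x
    exact eqOn_of_preconnected_open isOpen_univ huniv
      ((hFd.comp hGd).differentiableOn) differentiable_id.differentiableOn
      isOpen_Dpq (subset_univ _) hDne hFG (mem_univ x)
  have hFim : F '' (Dpq p q) = Dpq p q := by
    apply Subset.antisymm
    · rintro y ⟨x, hx, rfl⟩
      rw [hFf hx]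
      exact hfm hx
    · intro y hy
      refine ⟨g y, hgm hy, ?_⟩
      rw [hFf (hgm hy)]
      exact hinv.2 hy
  have hGim : G '' (Dpq p q) = Dpq p q := by
    apply Subset.antisymm
    · rintro y ⟨x, hx, rfl⟩
      rw [hGg hx]
      exact hgm hx
    · intro y hy
      refine ⟨f y, hfm hy, ?_⟩
      rw [hGg (hfm hy)]
      exact hinv.1 hy
  have hmapsto : ∀ (A B : W p q → W p q), (B ∘ A = id) → B '' (Dpq p q) = Dpq p q →
      Continuous B → MapsTo A (Cpq p q) (Cpq p q) := by
    intro A B hBA hBim hBcont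
    rw [Cpq_eq_compl_closure]
    intro x hx
    simp only [mem_compl_iff] at hx ⊢
    intro hcon
    apply hx
    have h1 : x = B (A x) := by
      have := congrFun hBA x
      simp only [Function.comp_apply, id_eq] at this
      exact this.symm
    have h2 : B (A x) ∈ B '' (closure (Dpq p q)) := ⟨A x, hcon, rfl⟩
    have h3 : B '' closure (Dpq p q) ⊆ closure (B '' (Dpq p q)) :=
      image_closure_subset_closure_image hBcont
    rw [hBim] at h3
    rw [h1]
    exact h3 h2
  exact ⟨F, G, hFd, hGd, hFf, hGFid, hFGid,
    hmapsto F G hGFid hGim hGd.continuous, hmapsto G F hFGid hFim hFd.continuous⟩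


/-- For p, q ≥ 2, every automorphism of D^{p,q} (resp. C^{p,q}) extends to an
automorphism of ℂⁿ which restricts to an automorphism of the complementary
domain; the restriction maps give mutually inverse isomorphisms
Aut(D^{p,q}) ≅ Aut(C^{p,q}). -/
theorem stmt_17 (p q : ℕ) (hp : 2 ≤ p) (hq : 2 ≤ q) :
    (∀ f g : (Fin p → ℂ) × (Fin q → ℂ) → (Fin p → ℂ) × (Fin q → ℂ),
      DifferentiableOn ℂ f (Dpq p q) → DifferentiableOn ℂ g (Dpq p q) →
      Set.MapsTo f (Dpq p q) (Dpq p q) → Set.MapsTo g (Dpq p q) (Dpq p q) →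
      Set.InvOn g f (Dpq p q) (Dpq p q) →
      ∃ F G : (Fin p → ℂ) × (Fin q → ℂ) → (Fin p → ℂ) × (Fin q → ℂ),
        Differentiable ℂ F ∧ Differentiable ℂ G ∧ Set.EqOn F f (Dpq p q) ∧
          G ∘ F = id ∧ F ∘ G = id ∧
          Set.MapsTo F (Cpq p q) (Cpq p q) ∧ Set.MapsTo G (Cpq p q) (Cpq p q)) ∧
    (∀ f g : (Fin p → ℂ) × (Fin q → ℂ) → (Fin p → ℂ) × (Fin q → ℂ),
      DifferentiableOn ℂ f (Cpq p q) → DifferentiableOn ℂ g (Cpq p q) →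
      Set.MapsTo f (Cpq p q) (Cpq p q) → Set.MapsTo g (Cpq p q) (Cpq p q) →
      Set.InvOn g f (Cpq p q) (Cpq p q) →
      ∃ F G : (Fin p → ℂ) × (Fin q → ℂ) → (Fin p → ℂ) × (Fin q → ℂ),
        Differentiable ℂ F ∧ Differentiable ℂ G ∧ Set.EqOn F f (Cpq p q) ∧
          G ∘ F = id ∧ F ∘ G = id ∧
          Set.MapsTo F (Dpq p q) (Dpq p q) ∧ Set.MapsTo G (Dpq p q) (Dpq p q)) := by
  constructor
  · exact main_half p q hp hq
  · intro f g hf hg hfm hgm hinv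
    set σ : HartogsAux.W p q → HartogsAux.W q p := Prod.swap with hσ
    set τ : HartogsAux.W q p → HartogsAux.W p q := Prod.swap with hτ
    have hσd : Differentiable ℂ σ := differentiable_snd.prodMk differentiable_fst
    have hτd : Differentiable ℂ τ := differentiable_snd.prodMk differentiable_fst
    have hτσ : ∀ x : HartogsAux.W p q, τ (σ x) = x := fun x => rfl
    have hστ : ∀ y : HartogsAux.W q p, σ (τ y) = y := fun y => rfl
    have hσC : ∀ x : HartogsAux.W p q, x ∈ Cpq p q ↔ σ x ∈ Dpq q p := fun x => Iff.rfl
    have hσD : ∀ x : HartogsAux.W p q, x ∈ Dpq p q ↔ σ x ∈ Cpq q p := fun x => Iff.rfl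
    have hτD : ∀ y : HartogsAux.W q p, y ∈ Dpq q p ↔ τ y ∈ Cpq p q := fun y => Iff.rfl
    have hτC : ∀ y : HartogsAux.W q p, y ∈ Cpq q p ↔ τ y ∈ Dpq p q := fun y => Iff.rfl
    set f' : HartogsAux.W q p → HartogsAux.W q p := fun y => σ (f (τ y)) with hf'def
    set g' : HartogsAux.W q p → HartogsAux.W q p := fun y => σ (g (τ y)) with hg'def
    have hτmaps : MapsTo τ (Dpq q p) (Cpq p q) := fun y hy => (hτD y).1 hy
    have hf'd : DifferentiableOn ℂ f' (Dpq q p) :=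
      hσd.comp_differentiableOn (hf.comp hτd.differentiableOn hτmaps)
    have hg'd : DifferentiableOn ℂ g' (Dpq q p) :=
      hσd.comp_differentiableOn (hg.comp hτd.differentiableOn hτmaps)
    have hf'm : MapsTo f' (Dpq q p) (Dpq q p) := by
      intro y hy
      have h1 : f (τ y) ∈ Cpq p q := hfm (hτmaps hy)
      exact (hσC _).1 h1
    have hg'm : MapsTo g' (Dpq q p) (Dpq q p) := by
      intro y hy
      have h1 : g (τ y) ∈ Cpq p q := hgm (hτmaps hy)
      exact (hσC _).1 h1
    have hinv' : InvOn g' f' (Dpq q p) (Dpq q p) := by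
      constructor
      · intro y hy
        show σ (g (τ (σ (f (τ y))))) = y
        rw [hτσ, hinv.1 (hτmaps hy), hστ]
      · intro y hy
        show σ (f (τ (σ (g (τ y))))) = y
        rw [hτσ, hinv.2 (hτmaps hy), hστ]
    obtain ⟨F', G', hF'd, hG'd, hF'eq, hG'F', hF'G', hF'c, hG'c⟩ :=
      main_half q p hq hp f' g' hf'd hg'd hf'm hg'm hinv'
    refine ⟨fun x => τ (F' (σ x)), fun x => τ (G' (σ x)), ?_, ?_, ?_, ?_, ?_, ?_, ?_⟩
    · exact hτd.comp (hF'd.comp hσd)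
    · exact hτd.comp (hG'd.comp hσd)
    · intro x hx
      have h1 : σ x ∈ Dpq q p := (hσC x).1 hx
      show τ (F' (σ x)) = f x
      rw [hF'eq h1]
      show τ (σ (f (τ (σ x)))) = f x
      rw [hτσ, hτσ]
    · funext x
      show τ (G' (σ (τ (F' (σ x))))) = x
      rw [hστ]
      have h1 : G' (F' (σ x)) = σ x := by
        have := congrFun hG'F' (σ x)
        simpa using this
      rw [h1, hτσ]
    · funext x
      show τ (F' (σ (τ (G' (σ x))))) = x
      rw [hστ]
      have h1 : F' (G' (σ x)) = σ x := by
        have := congrFun hF'G' (σ x)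
        simpa using this
      rw [h1, hτσ]
    · intro x hx
      have h1 : σ x ∈ Cpq q p := (hσD x).1 hx
      exact (hτC _).1 (hF'c h1)
    · intro x hx
      have h1 : σ x ∈ Cpq q p := (hσD x).1 hx
      exact (hτC _).1 (hG'c h1)
end

section
/- Let Ω ⊂ ℂ^{n+1} be an open set invariant under the torus action (α, z) ↦ (α₀z₀, …, αₙzₙ) for α ∈ T^{n+1}, and invariant under the one-parameter group z ↦ (e^{-2πc₁t}z₀, e^{-2πc₂t}z₁, …, e^{-2πc₂t}zₙ) for all t ∈ ℝ, with c₁ ≠ 0 and c₂ = 0. Then Ω = (ℂ × D) ∪ (ℂ* × D') for some open sets D, D' ⊆ ℂⁿ with D ⊆ D'. -/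
/-- An open set Ω ⊆ ℂ^{n+1} invariant under the torus T^{n+1} and under the
one-parameter group z ↦ (e^{-2πc₁t}z₀, e^{-2πc₂t}z₁, …, e^{-2πc₂t}zₙ) with
c₁ ≠ 0, c₂ = 0, is of the form (ℂ × D) ∪ (ℂ* × D') with D, D' open and D ⊆ D'. -/
theorem stmt_18 (n : ℕ) (Ω : Set (Fin (n + 1) → ℂ)) (hΩ : IsOpen Ω)
    (c₁ c₂ : ℝ) (hc₁ : c₁ ≠ 0) (hc₂ : c₂ = 0)
    (htorus : ∀ α : Fin (n + 1) → ℂ, (∀ i, ‖α i‖ = 1) →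
      ∀ z ∈ Ω, (fun i => α i * z i) ∈ Ω)
    (hflow : ∀ t : ℝ, ∀ z ∈ Ω,
      (fun i : Fin (n + 1) =>
        if i = 0 then (Real.exp (-(2 * Real.pi * c₁ * t)) : ℂ) * z i
        else (Real.exp (-(2 * Real.pi * c₂ * t)) : ℂ) * z i) ∈ Ω) :
    ∃ D D' : Set (Fin n → ℂ), IsOpen D ∧ IsOpen D' ∧ D ⊆ D' ∧
      Ω = {z | (fun i : Fin n => z i.succ) ∈ D} ∪
        {z | z 0 ≠ 0 ∧ (fun i : Fin n => z i.succ) ∈ D'} := by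
  -- scaling of first coordinate by any nonzero complex number preserves Ω
  have hscale : ∀ lam : ℂ, lam ≠ 0 → ∀ z ∈ Ω,
      Fin.cons (lam * z 0) (Fin.tail z) ∈ Ω := by
    intro lam hlam z hz
    have hr : (0:ℝ) < ‖lam‖ := norm_pos_iff.mpr hlam
    have h2 : (2*Real.pi*c₁) ≠ 0 := mul_ne_zero (by positivity) hc₁
    set t : ℝ := -(Real.log ‖lam‖)/(2*Real.pi*c₁) with ht
    have he : Real.exp (-(2*Real.pi*c₁*t)) = ‖lam‖ := by
      rw [ht]
      rw [show -(2*Real.pi*c₁*(-(Real.log ‖lam‖)/(2*Real.pi*c₁))) = Real.log ‖lam‖ by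
        field_simp]
      exact Real.exp_log hr
    have h1 := hflow t z hz
    have hnorm : ∀ i : Fin (n+1),
        ‖(if i = 0 then (lam / (‖lam‖ : ℂ)) else 1 : ℂ)‖ = 1 := by
      intro i
      by_cases h : i = 0
      · simp only [h, if_true, eq_self_iff_true, norm_div, Complex.norm_real, Real.norm_eq_abs,
          abs_norm]
        exact div_self hr.ne'
      · simp [h]
    have h2' := htorus (fun i => if i = 0 then (lam / (‖lam‖ : ℂ)) else 1) hnorm _ h1
    have heq : (fun i => (if i = 0 then (lam / (‖lam‖ : ℂ)) else 1) *
        (if i = 0 then (Real.exp (-(2 * Real.pi * c₁ * t)) : ℂ) * z i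
          else (Real.exp (-(2 * Real.pi * c₂ * t)) : ℂ) * z i))
        = Fin.cons (lam * z 0) (Fin.tail z) := by
      funext i
      refine Fin.cases ?_ (fun j => ?_) i
      · have hne : ((‖lam‖ : ℝ) : ℂ) ≠ 0 := by exact_mod_cast hr.ne'
        simp only [eq_self_iff_true, if_true, Fin.cons_zero, he]
        rw [← mul_assoc, div_mul_cancel₀ _ hne]
      · simp [Fin.succ_ne_zero, hc₂, Fin.tail]
    rwa [heq] at h2'
  -- setting the first coordinate to anything, provided it can be 0
  have hset : ∀ w : Fin n → ℂ, Fin.cons 0 w ∈ Ω → ∀ c : ℂ, Fin.cons c w ∈ Ω := by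
    intro w hw c
    rcases eq_or_ne c 0 with rfl | hc
    · exact hw
    · obtain ⟨ε, hε, hball⟩ := Metric.isOpen_iff.mp hΩ _ hw
      have hmem : Fin.cons ((ε/2 : ℝ) : ℂ) w ∈ Ω := by
        apply hball
        rw [Metric.mem_ball, dist_pi_lt_iff hε]
        intro i
        refine Fin.cases ?_ (fun j => ?_) i
        · simp only [Fin.cons_zero, Complex.dist_eq, sub_zero]
          rw [Complex.norm_real, Real.norm_eq_abs, abs_of_pos (by positivity)]
          linarith
        · simpa using hε
      have h2 : ((ε/2 : ℝ) : ℂ) ≠ 0 := by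
        exact_mod_cast (by positivity : (ε/2 : ℝ) ≠ 0)
      have := hscale (c * ((ε/2 : ℝ):ℂ)⁻¹) (by
        exact mul_ne_zero hc (inv_ne_zero h2)) _ hmem
      rwa [show (Fin.cons ((ε/2:ℝ):ℂ) w : Fin (n+1) → ℂ) 0 = ((ε/2:ℝ):ℂ) from Fin.cons_zero _ _,
        Fin.tail_cons, mul_assoc, inv_mul_cancel₀ h2, mul_one] at this
  have hcont : ∀ c : ℂ, Continuous fun w : Fin n → ℂ => (Fin.cons c w : Fin (n+1) → ℂ) := by
    intro c
    refine continuous_pi fun i => ?_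
    refine Fin.cases ?_ (fun j => ?_) i
    · simp only [Fin.cons_zero]; exact continuous_const
    · simp only [Fin.cons_succ]; exact continuous_apply j
  refine ⟨{w | Fin.cons 0 w ∈ Ω}, {w | Fin.cons 1 w ∈ Ω}, ?_, ?_, ?_, ?_⟩
  · exact hΩ.preimage (hcont 0)
  · exact hΩ.preimage (hcont 1)
  · intro w hw; exact hset w hw 1
  · ext z
    constructor
    · intro hz
      by_cases h0 : z 0 = 0
      · left
        show Fin.cons (0:ℂ) (fun i => z i.succ) ∈ Ω
        have : Fin.cons (0:ℂ) (fun i => z i.succ) = z := by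
          rw [← h0]; exact Fin.cons_self_tail z
        rwa [this]
      · right
        refine ⟨h0, ?_⟩
        show Fin.cons (1:ℂ) (fun i => z i.succ) ∈ Ω
        have := hscale (z 0)⁻¹ (inv_ne_zero h0) z hz
        rwa [inv_mul_cancel₀ h0] at this
    · rintro (h | ⟨h0, h⟩)
      · have := hset _ h (z 0)
        rwa [show (Fin.cons (z 0) fun i => z i.succ) = z from Fin.cons_self_tail z] at this
      · have := hscale (z 0) h0 _ h
        rw [Fin.tail_cons] at this
        simp only [Fin.cons_zero, mul_one] at this
        rwa [show (Fin.cons (z 0) fun i => z i.succ) = z from Fin.cons_self_tail z] at this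
end
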